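/- arXiv:1211.6061 — 3 statements merged into one kernel-verified Lean document; each statement's English description precedes it below -/
import Mathlib

section
/- Let n, m ≥ 1 be integers, 1 ≤ p < ∞, and let p' be the conjugate exponent of p. Let G₁ : ℝⁿ × ℝⁿ → ℂ and G₂ : ℝᵐ × ℝᵐ → ℂ be measurable kernels such that G₁(x₁,·) ∈ L^{p'}(ℝⁿ) for almost every x₁ ∈ ℝⁿ and G₂(x₂,·) ∈ L^{p'}(ℝᵐ) for almost every x₂ ∈ ℝᵐ. Define integral operators T₁f(x₁) = ∫_{ℝⁿ} G₁(x₁,y₁) f(y₁) dy₁ and T₂f(x₂) = ∫_{ℝᵐ} G₂(x₂,y₂) f(y₂) dy₂, and let T be the integral operator on ℝⁿ × ℝᵐ with kernel G((x₁,x₂),(y₁,y₂)) = G₁(x₁,y₁)·G₂(x₂,y₂). If T₁ is bounded on L^p(ℝⁿ) and T₂ is bounded on L^p(ℝᵐ), then T is bounded on L^p(ℝⁿ × ℝᵐ) and ‖T‖_{p→p} = ‖T₁‖_{p→p} · ‖T₂‖_{p→p}. -/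
open MeasureTheory Complex ENNReal

/-- The operator norm of `T` on `L^p(μ)`, as the supremum of the ratios
`‖T f‖_p / ‖f‖_p` over nonzero `f ∈ L^p(μ)`. -/
noncomputable def opNormLp {X : Type*} [MeasurableSpace X] (μ : Measure X)
    (p : ℝ≥0∞) (T : (X → ℂ) → X → ℂ) : ℝ≥0∞ :=
  sSup {r : ℝ≥0∞ | ∃ f : X → ℂ, MemLp f p μ ∧ eLpNorm f p μ ≠ 0 ∧
    r = eLpNorm (T f) p μ / eLpNorm f p μ}

/-- The integral operator with kernel `G`. -/
noncomputable def intOp {X : Type*} [MeasurableSpace X] (μ : Measure X)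
    (G : X → X → ℂ) (f : X → ℂ) (x : X) : ℂ :=
  ∫ y, G x y * f y ∂μ

lemma eLpNorm_eq_lintegral_rpow_nnnorm {α : Type*} [MeasurableSpace α] {μ : Measure α}
    {p : ℝ≥0∞} (hp0 : p ≠ 0) (hpt : p ≠ ∞) {f : α → ℂ} :
    eLpNorm f p μ = (∫⁻ x, (‖f x‖₊ : ℝ≥0∞) ^ p.toReal ∂μ) ^ (1 / p.toReal) :=
  eLpNorm_eq_lintegral_rpow_enorm_toReal hp0 hpt

section Aux
variable {α β : Type*} [MeasurableSpace α] [MeasurableSpace β] {μ : Measure α} {ν : Measure β}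
  {p p' : ℝ≥0∞}

lemma intOp_congr_fun {G : α → α → ℂ} {f f' : α → ℂ} (h : f =ᵐ[μ] f') :
    intOp μ G f = intOp μ G f' :=
  funext fun x => integral_congr_ae (h.mono fun y hy => by simp only [hy])

lemma one_div_conj (hpp' : p⁻¹ + p'⁻¹ = 1) : (1 : ℝ≥0∞) / 1 = 1 / p' + 1 / p := by
  rw [one_div, one_div, one_div, inv_one, ← hpp', add_comm]

lemma holder_int (hpp' : p⁻¹ + p'⁻¹ = 1) {g f : α → ℂ}
    (hg : MemLp g p' μ) (hf : MemLp f p μ) : Integrable (fun y => g y * f y) μ := by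
  rw [← memLp_one_iff_integrable]
  haveI : ENNReal.HolderTriple p' p 1 := ⟨by rw [inv_one, add_comm, hpp']⟩
  have h := MemLp.smul (p := p') (q := p) (r := 1) hf hg
  exact h

lemma holder_eLpNorm (hpp' : p⁻¹ + p'⁻¹ = 1) {g f : α → ℂ}
    (hg : AEStronglyMeasurable g μ) (hf : AEStronglyMeasurable f μ) :
    eLpNorm (fun y => g y * f y) 1 μ ≤ eLpNorm g p' μ * eLpNorm f p μ := by
  haveI : ENNReal.HolderTriple p' p 1 := ⟨by rw [inv_one, add_comm, hpp']⟩
  exact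
    eLpNorm_smul_le_mul_eLpNorm (p := p') (q := p) (r := 1) (f := f) (φ := g) hf hg

lemma eLpNorm_rpow_toReal (hp0 : p ≠ 0) (hpt : p ≠ ∞) (f : α → ℂ) :
    eLpNorm f p μ ^ p.toReal = ∫⁻ x, (‖f x‖₊ : ℝ≥0∞) ^ p.toReal ∂μ := by
  rw [eLpNorm_eq_lintegral_rpow_nnnorm hp0 hpt, one_div, ← ENNReal.rpow_mul,
    inv_mul_cancel₀ (ENNReal.toReal_ne_zero.mpr ⟨hp0, hpt⟩), ENNReal.rpow_one]

end Aux

section Holder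
variable {α : Type*} [MeasurableSpace α] {μ : Measure α} {p p' : ℝ≥0∞}

lemma conj_one_le (hpp' : p⁻¹ + p'⁻¹ = 1) : 1 ≤ p' := by
  have h1 : p'⁻¹ ≤ 1 := by rw [← hpp']; exact le_add_self
  exact ENNReal.inv_le_one.mp h1

lemma conj_eq_top (hp1 : p = 1) (hpp' : p⁻¹ + p'⁻¹ = 1) : p' = ∞ := by
  subst hp1
  rw [inv_one] at hpp'
  have : p'⁻¹ = 0 := by
    have := (ENNReal.add_right_inj (a := (1:ℝ≥0∞)) one_ne_top (b := p'⁻¹) (c := 0))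
    exact this.mp (by simpa using hpp')
  exact ENNReal.inv_eq_zero.mp this

lemma conj_facts_of_lt (hp1 : 1 < p) (hpt : p ≠ ∞) (hpp' : p⁻¹ + p'⁻¹ = 1) :
    p' ≠ 0 ∧ p' ≠ ∞ ∧ Real.HolderConjugate p'.toReal p.toReal := by
  have hp0 : p ≠ 0 := (zero_lt_one.trans hp1).ne'
  have hpinv0 : p⁻¹ ≠ 0 := ENNReal.inv_ne_zero.mpr hpt
  have hp'inv0 : p'⁻¹ ≠ 0 := by
    intro h
    rw [h, add_zero] at hpp'
    exact hp1.ne' (ENNReal.inv_eq_one.mp hpp')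
  have hp't : p' ≠ ∞ := fun h => hp'inv0 (by simp [h])
  have hp'inv_le : p'⁻¹ ≤ 1 := by rw [← hpp']; exact le_add_self
  have hp'inv_lt : p'⁻¹ < 1 := by
    rcases hp'inv_le.lt_or_eq with h | h
    · exact h
    · exfalso
      rw [h] at hpp'
      have h0 : p⁻¹ + 1 = 0 + 1 := by simpa using hpp'
      exact hpinv0 ((ENNReal.add_left_inj one_ne_top).mp h0)
  have hp'1 : 1 < p' := ENNReal.inv_lt_one.mp hp'inv_lt
  have hp'0 : p' ≠ 0 := (zero_lt_one.trans hp'1).ne'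
  refine ⟨hp'0, hp't, Real.holderConjugate_iff.mpr ⟨?_, ?_⟩⟩
  · exact (ENNReal.toReal_lt_toReal one_ne_top hp't).mpr hp'1
  · rw [← ENNReal.toReal_inv, ← ENNReal.toReal_inv,
      ← ENNReal.toReal_add (ENNReal.inv_ne_top.mpr hp'0) (ENNReal.inv_ne_top.mpr hp0),
      add_comm, hpp', ENNReal.toReal_one]

/-- Hölder with an `ℝ≥0∞`-valued second factor. -/
lemma lintegral_enorm_mul_le (hp : 1 ≤ p) (hpt : p ≠ ∞) (hpp' : p⁻¹ + p'⁻¹ = 1)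
    {g : α → ℂ} (hg : AEStronglyMeasurable g μ) {c : α → ℝ≥0∞} (hc : AEMeasurable c μ) :
    ∫⁻ y, (‖g y‖₊ : ℝ≥0∞) * c y ∂μ ≤
      eLpNorm g p' μ * (∫⁻ y, c y ^ p.toReal ∂μ) ^ (1 / p.toReal) := by
  rcases hp.lt_or_eq with hp1 | hp1
  · obtain ⟨hp'0, hp't, hconj⟩ := conj_facts_of_lt hp1 hpt hpp'
    have := ENNReal.lintegral_mul_le_Lp_mul_Lq μ hconj hg.enorm hc
    simp only [Pi.mul_apply] at this
    rwa [eLpNorm_eq_lintegral_rpow_nnnorm hp'0 hp't]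
  · have hp't : p' = ∞ := conj_eq_top hp1.symm hpp'
    subst hp't
    rw [← hp1]
    simp only [inv_one, ENNReal.toReal_one, ENNReal.rpow_one, one_div, inv_one]
    calc ∫⁻ y, (‖g y‖₊ : ℝ≥0∞) * c y ∂μ
        ≤ ∫⁻ y, eLpNormEssSup g μ * c y ∂μ := by
          refine lintegral_mono_ae ?_
          filter_upwards [ae_le_eLpNormEssSup (f := g) (μ := μ)] with y hy
          exact mul_le_mul_left hy _
      _ = eLpNormEssSup g μ * ∫⁻ y, c y ∂μ := lintegral_const_mul'' _ hc
      _ = eLpNorm g ∞ μ * ∫⁻ y, c y ∂μ := by rw [eLpNorm_exponent_top]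

end Holder

section Core
variable {α β : Type*} [MeasurableSpace α] [MeasurableSpace β]
  {μ : Measure α} {ν : Measure β} [SigmaFinite μ] [SigmaFinite ν]
  {p p' : ℝ≥0∞}

lemma core_bound_meas (hp : 1 ≤ p) (hpt : p ≠ ∞) (hpp' : p⁻¹ + p'⁻¹ = 1)
    {G₁ : α → α → ℂ} {G₂ : β → β → ℂ}
    (hG₁m : Measurable (Function.uncurry G₁)) (hG₂m : Measurable (Function.uncurry G₂))
    (hG₁ : ∀ᵐ x₁ ∂μ, MemLp (G₁ x₁) p' μ) (hG₂ : ∀ᵐ x₂ ∂ν, MemLp (G₂ x₂) p' ν)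
    {N₁ N₂ : ℝ≥0∞} (hN₁ : N₁ ≠ ∞) (hN₂ : N₂ ≠ ∞)
    (hT₁ : ∀ f, MemLp f p μ → eLpNorm (intOp μ G₁ f) p μ ≤ N₁ * eLpNorm f p μ)
    (hT₂ : ∀ f, MemLp f p ν → eLpNorm (intOp ν G₂ f) p ν ≤ N₂ * eLpNorm f p ν)
    {F : α × β → ℂ} (hFsm : StronglyMeasurable F) (hF : MemLp F p (μ.prod ν)) :
    eLpNorm (intOp (μ.prod ν) (fun x y => G₁ x.1 y.1 * G₂ x.2 y.2) F) p (μ.prod ν)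
      ≤ N₁ * N₂ * eLpNorm F p (μ.prod ν) := by
  have hp0 : p ≠ 0 := fun h => by simp [h] at hp
  set q := p.toReal with hq_def
  have hq0 : q ≠ 0 := ENNReal.toReal_ne_zero.mpr ⟨hp0, hpt⟩
  have hqpos : (0:ℝ) ≤ q := ENNReal.toReal_nonneg
  have hFm : Measurable F := hFsm.measurable
  have hFq : Measurable fun z => (‖F z‖₊ : ℝ≥0∞) ^ q := hFm.enorm.pow_const q
  have hFint : ∫⁻ z, (‖F z‖₊ : ℝ≥0∞) ^ q ∂(μ.prod ν) ≠ ∞ := by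
    rw [← eLpNorm_rpow_toReal hp0 hpt]
    exact (ENNReal.rpow_lt_top_of_nonneg hqpos hF.2.ne).ne
  -- slices of F
  have hFslice : ∀ᵐ y₁ ∂μ, MemLp (fun y₂ => F (y₁, y₂)) p ν := by
    have h1 := hFint
    rw [lintegral_prod _ hFq.aemeasurable] at h1
    filter_upwards [ae_lt_top hFq.lintegral_prod_right' h1] with y₁ h
    refine ⟨(hFsm.comp_measurable measurable_prodMk_left).aestronglyMeasurable, ?_⟩
    rw [eLpNorm_eq_lintegral_rpow_nnnorm hp0 hpt]
    exact ENNReal.rpow_lt_top_of_nonneg (by positivity) h.ne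
  -- the intermediate operator H
  set H : α × β → ℂ := fun z => ∫ y₂, G₂ z.2 y₂ * F (z.1, y₂) ∂ν with hH_def
  have hHsm : StronglyMeasurable H := by
    have : Measurable fun w : (α × β) × β => G₂ w.1.2 w.2 * F (w.1.1, w.2) :=
      (hG₂m.comp ((measurable_snd.comp measurable_fst).prodMk measurable_snd)).mul
        (hFm.comp ((measurable_fst.comp measurable_fst).prodMk measurable_snd))
    exact this.stronglyMeasurable.integral_prod_right'
  have hHq : Measurable fun z => (‖H z‖₊ : ℝ≥0∞) ^ q := hHsm.measurable.enorm.pow_const q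
  have hN₂q : N₂ ^ q ≠ ∞ := ENNReal.rpow_ne_top_of_nonneg hqpos hN₂
  have hHbound : ∫⁻ z, (‖H z‖₊ : ℝ≥0∞) ^ q ∂(μ.prod ν)
      ≤ N₂ ^ q * ∫⁻ z, (‖F z‖₊ : ℝ≥0∞) ^ q ∂(μ.prod ν) := by
    rw [lintegral_prod _ hHq.aemeasurable, lintegral_prod _ hFq.aemeasurable,
      ← lintegral_const_mul' _ _ hN₂q]
    refine lintegral_mono_ae ?_
    filter_upwards [hFslice] with y₁ hy₁
    calc ∫⁻ x₂, (‖H (y₁, x₂)‖₊ : ℝ≥0∞) ^ q ∂ν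
        = eLpNorm (intOp ν G₂ fun y₂ => F (y₁, y₂)) p ν ^ q :=
          (eLpNorm_rpow_toReal hp0 hpt _).symm
      _ ≤ (N₂ * eLpNorm (fun y₂ => F (y₁, y₂)) p ν) ^ q :=
          ENNReal.rpow_le_rpow (hT₂ _ hy₁) hqpos
      _ = N₂ ^ q * eLpNorm (fun y₂ => F (y₁, y₂)) p ν ^ q :=
          ENNReal.mul_rpow_of_nonneg _ _ hqpos
      _ = N₂ ^ q * ∫⁻ y₂, (‖F (y₁, y₂)‖₊ : ℝ≥0∞) ^ q ∂ν := by
          rw [eLpNorm_rpow_toReal hp0 hpt]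
  have hHint : ∫⁻ z, (‖H z‖₊ : ℝ≥0∞) ^ q ∂(μ.prod ν) ≠ ∞ :=
    ne_top_of_le_ne_top (ENNReal.mul_ne_top hN₂q hFint) hHbound
  -- slices of H in the second variable
  have hHslice : ∀ᵐ x₂ ∂ν, MemLp (fun y₁ => H (y₁, x₂)) p μ := by
    have h1 := hHint
    rw [lintegral_prod_symm _ hHq.aemeasurable] at h1
    filter_upwards [ae_lt_top hHq.lintegral_prod_left' h1] with x₂ h
    refine ⟨(hHsm.comp_measurable (measurable_id.prodMk measurable_const)).aestronglyMeasurable, ?_⟩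
    rw [eLpNorm_eq_lintegral_rpow_nnnorm hp0 hpt]
    exact ENNReal.rpow_lt_top_of_nonneg (by positivity) h.ne
  -- the L^p-norm-in-the-second-variable function
  set c : α → ℝ≥0∞ := fun y₁ => (∫⁻ y₂, (‖F (y₁, y₂)‖₊ : ℝ≥0∞) ^ q ∂ν) ^ (1/q) with hc_def
  have hcm : Measurable c := hFq.lintegral_prod_right'.pow_const _
  have hcq : ∫⁻ y₁, c y₁ ^ q ∂μ = ∫⁻ z, (‖F z‖₊ : ℝ≥0∞) ^ q ∂(μ.prod ν) := by
    rw [lintegral_prod _ hFq.aemeasurable]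
    refine lintegral_congr fun y₁ => ?_
    rw [hc_def, ← ENNReal.rpow_mul, one_div, inv_mul_cancel₀ hq0, ENNReal.rpow_one]
  have hae₁ : ∀ᵐ z : α × β ∂(μ.prod ν), MemLp (G₁ z.1) p' μ :=
    Measure.quasiMeasurePreserving_fst.ae hG₁
  have hae₂ : ∀ᵐ z : α × β ∂(μ.prod ν), MemLp (G₂ z.2) p' ν :=
    Measure.quasiMeasurePreserving_snd.ae hG₂
  -- a.e. integrability of the full kernel
  have hInt : ∀ᵐ z : α × β ∂(μ.prod ν),
      Integrable (fun y : α × β => G₁ z.1 y.1 * (G₂ z.2 y.2 * F y)) (μ.prod ν) := by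
    filter_upwards [hae₁, hae₂] with z hz₁ hz₂
    have hmeas : Measurable fun y : α × β => G₁ z.1 y.1 * (G₂ z.2 y.2 * F y) :=
      (hG₁m.comp (measurable_const.prodMk measurable_fst)).mul
        ((hG₂m.comp (measurable_const.prodMk measurable_snd)).mul hFm)
    refine ⟨hmeas.aestronglyMeasurable, ?_⟩
    rw [hasFiniteIntegral_def]
    have hrw : ∫⁻ y : α × β, (‖G₁ z.1 y.1 * (G₂ z.2 y.2 * F y)‖₊ : ℝ≥0∞) ∂(μ.prod ν)
        = ∫⁻ y₁, (‖G₁ z.1 y₁‖₊ : ℝ≥0∞) *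
            ∫⁻ y₂, (‖G₂ z.2 y₂‖₊ : ℝ≥0∞) * ‖F (y₁, y₂)‖₊ ∂ν ∂μ := by
      rw [lintegral_prod _ hmeas.nnnorm.coe_nnreal_ennreal.aemeasurable]
      refine lintegral_congr fun y₁ => ?_
      rw [← lintegral_const_mul' _ _ ENNReal.coe_ne_top]
      refine lintegral_congr fun y₂ => ?_
      simp [nnnorm_mul, ENNReal.coe_mul, mul_assoc]
    simp only [enorm_eq_nnnorm]
    rw [hrw]
    have hmono : ∫⁻ y₁, (‖G₁ z.1 y₁‖₊ : ℝ≥0∞) *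
            ∫⁻ y₂, (‖G₂ z.2 y₂‖₊ : ℝ≥0∞) * ‖F (y₁, y₂)‖₊ ∂ν ∂μ
        ≤ ∫⁻ y₁, eLpNorm (G₂ z.2) p' ν * ((‖G₁ z.1 y₁‖₊ : ℝ≥0∞) * c y₁) ∂μ := by
      refine lintegral_mono fun y₁ => ?_
      rw [mul_left_comm]
      refine mul_le_mul_right ?_ _
      exact lintegral_enorm_mul_le hp hpt hpp' hz₂.1
        ((hFm.comp measurable_prodMk_left).enorm.aemeasurable)
    refine lt_of_le_of_lt hmono ?_
    rw [lintegral_const_mul' _ _ hz₂.eLpNorm_ne_top]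
    refine ENNReal.mul_lt_top hz₂.eLpNorm_lt_top ?_
    refine lt_of_le_of_lt (lintegral_enorm_mul_le hp hpt hpp' hz₁.1 hcm.aemeasurable) ?_
    rw [hcq]
    exact ENNReal.mul_lt_top hz₁.eLpNorm_lt_top
      (ENNReal.rpow_lt_top_of_nonneg (by positivity) hFint)
  -- the Fubini identity
  have hEq : ∀ᵐ z : α × β ∂(μ.prod ν),
      intOp (μ.prod ν) (fun x y => G₁ x.1 y.1 * G₂ x.2 y.2) F z
        = intOp μ G₁ (fun y₁ => H (y₁, z.2)) z.1 := by
    filter_upwards [hInt] with z hz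
    have h1 : intOp (μ.prod ν) (fun x y => G₁ x.1 y.1 * G₂ x.2 y.2) F z
        = ∫ y : α × β, G₁ z.1 y.1 * (G₂ z.2 y.2 * F y) ∂(μ.prod ν) := by
      simp only [intOp, mul_assoc]
    rw [h1, integral_prod _ hz]
    refine integral_congr_ae (Filter.Eventually.of_forall fun y₁ => ?_)
    show ∫ y₂, G₁ z.1 y₁ * (G₂ z.2 y₂ * F (y₁, y₂)) ∂ν = G₁ z.1 y₁ * H (y₁, z.2)
    rw [integral_const_mul]
  -- conclusion
  have hKsm : StronglyMeasurable fun z : α × β => intOp μ G₁ (fun y₁ => H (y₁, z.2)) z.1 := by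
    have : Measurable fun w : (α × β) × α => G₁ w.1.1 w.2 * H (w.2, w.1.2) :=
      (hG₁m.comp ((measurable_fst.comp measurable_fst).prodMk measurable_snd)).mul
        (hHsm.measurable.comp (measurable_snd.prodMk (measurable_snd.comp measurable_fst)))
    exact this.stronglyMeasurable.integral_prod_right'
  have hKq : Measurable fun z : α × β =>
      (‖intOp μ G₁ (fun y₁ => H (y₁, z.2)) z.1‖₊ : ℝ≥0∞) ^ q :=
    hKsm.measurable.enorm.pow_const q
  have hN₁q : N₁ ^ q ≠ ∞ := ENNReal.rpow_ne_top_of_nonneg hqpos hN₁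
  calc eLpNorm (intOp (μ.prod ν) (fun x y => G₁ x.1 y.1 * G₂ x.2 y.2) F) p (μ.prod ν)
      = eLpNorm (fun z : α × β => intOp μ G₁ (fun y₁ => H (y₁, z.2)) z.1) p (μ.prod ν) :=
        eLpNorm_congr_ae hEq
    _ = (∫⁻ z : α × β, (‖intOp μ G₁ (fun y₁ => H (y₁, z.2)) z.1‖₊ : ℝ≥0∞) ^ q
          ∂(μ.prod ν)) ^ (1/q) := by
        rw [eLpNorm_eq_lintegral_rpow_nnnorm hp0 hpt]
    _ ≤ (N₁ ^ q * (N₂ ^ q * ∫⁻ z, (‖F z‖₊ : ℝ≥0∞) ^ q ∂(μ.prod ν))) ^ (1/q) := by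
        refine ENNReal.rpow_le_rpow ?_ (by positivity)
        rw [lintegral_prod_symm _ hKq.aemeasurable]
        have hstep : ∫⁻ x₂, ∫⁻ x₁, (‖intOp μ G₁ (fun y₁ => H (y₁, x₂)) x₁‖₊ : ℝ≥0∞) ^ q ∂μ ∂ν
            ≤ ∫⁻ x₂, N₁ ^ q * ∫⁻ x₁, (‖H (x₁, x₂)‖₊ : ℝ≥0∞) ^ q ∂μ ∂ν := by
          refine lintegral_mono_ae ?_
          filter_upwards [hHslice] with x₂ h
          calc ∫⁻ x₁, (‖intOp μ G₁ (fun y₁ => H (y₁, x₂)) x₁‖₊ : ℝ≥0∞) ^ q ∂μ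
              = eLpNorm (intOp μ G₁ fun y₁ => H (y₁, x₂)) p μ ^ q :=
                (eLpNorm_rpow_toReal hp0 hpt _).symm
            _ ≤ (N₁ * eLpNorm (fun y₁ => H (y₁, x₂)) p μ) ^ q :=
                ENNReal.rpow_le_rpow (hT₁ _ h) hqpos
            _ = N₁ ^ q * eLpNorm (fun y₁ => H (y₁, x₂)) p μ ^ q :=
                ENNReal.mul_rpow_of_nonneg _ _ hqpos
            _ = N₁ ^ q * ∫⁻ x₁, (‖H (x₁, x₂)‖₊ : ℝ≥0∞) ^ q ∂μ := by
                rw [eLpNorm_rpow_toReal hp0 hpt]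
        refine hstep.trans ?_
        rw [lintegral_const_mul' _ _ hN₁q, ← lintegral_prod_symm _ hHq.aemeasurable]
        exact mul_le_mul_right hHbound _
    _ = N₁ * N₂ * eLpNorm F p (μ.prod ν) := by
        rw [eLpNorm_eq_lintegral_rpow_nnnorm hp0 hpt,
          ENNReal.mul_rpow_of_nonneg _ _ (by positivity : (0:ℝ) ≤ 1/q),
          ENNReal.mul_rpow_of_nonneg _ _ (by positivity : (0:ℝ) ≤ 1/q),
          ← ENNReal.rpow_mul N₁, ← ENNReal.rpow_mul N₂, mul_one_div, div_self hq0,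
          ENNReal.rpow_one, ENNReal.rpow_one, mul_assoc]

lemma core_bound (hp : 1 ≤ p) (hpt : p ≠ ∞) (hpp' : p⁻¹ + p'⁻¹ = 1)
    {G₁ : α → α → ℂ} {G₂ : β → β → ℂ}
    (hG₁m : Measurable (Function.uncurry G₁)) (hG₂m : Measurable (Function.uncurry G₂))
    (hG₁ : ∀ᵐ x₁ ∂μ, MemLp (G₁ x₁) p' μ) (hG₂ : ∀ᵐ x₂ ∂ν, MemLp (G₂ x₂) p' ν)
    {N₁ N₂ : ℝ≥0∞} (hN₁ : N₁ ≠ ∞) (hN₂ : N₂ ≠ ∞)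
    (hT₁ : ∀ f, MemLp f p μ → eLpNorm (intOp μ G₁ f) p μ ≤ N₁ * eLpNorm f p μ)
    (hT₂ : ∀ f, MemLp f p ν → eLpNorm (intOp ν G₂ f) p ν ≤ N₂ * eLpNorm f p ν)
    {F : α × β → ℂ} (hF : MemLp F p (μ.prod ν)) :
    eLpNorm (intOp (μ.prod ν) (fun x y => G₁ x.1 y.1 * G₂ x.2 y.2) F) p (μ.prod ν)
      ≤ N₁ * N₂ * eLpNorm F p (μ.prod ν) := by
  have hmk := hF.1.ae_eq_mk
  calc eLpNorm (intOp (μ.prod ν) (fun x y => G₁ x.1 y.1 * G₂ x.2 y.2) F) p (μ.prod ν)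
      = eLpNorm (intOp (μ.prod ν) (fun x y => G₁ x.1 y.1 * G₂ x.2 y.2) (hF.1.mk F)) p
        (μ.prod ν) := by rw [intOp_congr_fun hmk]
    _ ≤ N₁ * N₂ * eLpNorm (hF.1.mk F) p (μ.prod ν) :=
        core_bound_meas hp hpt hpp' hG₁m hG₂m hG₁ hG₂ hN₁ hN₂ hT₁ hT₂
          hF.1.stronglyMeasurable_mk (hF.ae_eq hmk)
    _ = N₁ * N₂ * eLpNorm F p (μ.prod ν) := by rw [← eLpNorm_congr_ae hmk]

end Core


section OpNorm
variable {α : Type*} [MeasurableSpace α] {μ : Measure α} {p : ℝ≥0∞}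

lemma opNormLp_le {T : (α → ℂ) → α → ℂ} {C : ℝ≥0∞}
    (hC : ∀ f, MemLp f p μ → eLpNorm (T f) p μ ≤ C * eLpNorm f p μ) :
    opNormLp μ p T ≤ C := by
  refine sSup_le ?_
  rintro r ⟨f, hf, hf0, rfl⟩
  exact ENNReal.div_le_of_le_mul (hC f hf)

lemma eLpNorm_intOp_le_opNormLp (hp0 : p ≠ 0) (G : α → α → ℂ) {f : α → ℂ}
    (hf : MemLp f p μ) :
    eLpNorm (intOp μ G f) p μ ≤ opNormLp μ p (intOp μ G) * eLpNorm f p μ := by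
  by_cases h0 : eLpNorm f p μ = 0
  · have hf0 : f =ᵐ[μ] 0 := (eLpNorm_eq_zero_iff hf.1 hp0).mp h0
    have h1 : intOp μ G f = intOp μ G 0 := intOp_congr_fun hf0
    have h2 : intOp μ G (0 : α → ℂ) = fun _ => (0 : ℂ) := by
      funext x; simp [intOp]
    rw [h1, h2]
    simp
  · have hmem : eLpNorm (intOp μ G f) p μ / eLpNorm f p μ ∈
        {r : ℝ≥0∞ | ∃ g : α → ℂ, MemLp g p μ ∧ eLpNorm g p μ ≠ 0 ∧
          r = eLpNorm (intOp μ G g) p μ / eLpNorm g p μ} := ⟨f, hf, h0, rfl⟩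
    calc eLpNorm (intOp μ G f) p μ
        = eLpNorm (intOp μ G f) p μ / eLpNorm f p μ * eLpNorm f p μ :=
          (ENNReal.div_mul_cancel h0 hf.eLpNorm_ne_top).symm
      _ ≤ opNormLp μ p (intOp μ G) * eLpNorm f p μ := mul_le_mul_left (le_sSup hmem) _

lemma ennreal_div_mul_div {a b c d : ℝ≥0∞} (hc0 : c ≠ 0) (hct : c ≠ ∞) :
    a / c * (b / d) = a * b / (c * d) := by
  rw [div_eq_mul_inv, div_eq_mul_inv, div_eq_mul_inv, ENNReal.mul_inv (Or.inl hc0) (Or.inl hct)]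
  ring

end OpNorm

section ProdMul
variable {α β : Type*} [MeasurableSpace α] [MeasurableSpace β] {μ : Measure α} {ν : Measure β}
  [SFinite μ] [SFinite ν] {p : ℝ≥0∞}

lemma eLpNorm_prod_mul (hp0 : p ≠ 0) (hpt : p ≠ ∞)
    {u : α → ℂ} {v : β → ℂ} (hu : AEStronglyMeasurable u μ) (hv : AEStronglyMeasurable v ν) :
    eLpNorm (fun z : α × β => u z.1 * v z.2) p (μ.prod ν) = eLpNorm u p μ * eLpNorm v p ν := by
  rw [eLpNorm_eq_lintegral_rpow_nnnorm hp0 hpt, eLpNorm_eq_lintegral_rpow_nnnorm hp0 hpt,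
    eLpNorm_eq_lintegral_rpow_nnnorm hp0 hpt,
    ← ENNReal.mul_rpow_of_nonneg _ _ (by positivity : (0:ℝ) ≤ 1 / p.toReal)]
  congr 1
  rw [← lintegral_prod_mul (hu.aemeasurable.nnnorm.coe_nnreal_ennreal.pow_const _) (hv.aemeasurable.nnnorm.coe_nnreal_ennreal.pow_const _)]
  refine lintegral_congr fun z => ?_
  simp [nnnorm_mul, ENNReal.coe_mul, ENNReal.mul_rpow_of_nonneg _ _ ENNReal.toReal_nonneg]

end ProdMul


/-- **Proposition (Segal's lemma for tensor products of integral operators)**: if the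
integral operators `T₁`, `T₂` with kernels `G₁`, `G₂` (whose slices `Gᵢ(xᵢ,·)` lie in
`L^{p'}` for a.e. `xᵢ`) are bounded on `L^p(ℝⁿ)` and `L^p(ℝᵐ)` respectively, then the
integral operator `T` with kernel `G((x₁,x₂),(y₁,y₂)) = G₁(x₁,y₁) G₂(x₂,y₂)` is
bounded on `L^p(ℝⁿ × ℝᵐ)` and `‖T‖_{p→p} = ‖T₁‖_{p→p} ‖T₂‖_{p→p}`. -/
theorem segal_tensor_opNorm (n m : ℕ) (hn : 1 ≤ n) (hm : 1 ≤ m)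
    (p p' : ℝ≥0∞) (hp : 1 ≤ p) (hp_top : p ≠ ∞) (hpp' : p⁻¹ + p'⁻¹ = 1)
    (G₁ : (Fin n → ℝ) → (Fin n → ℝ) → ℂ) (G₂ : (Fin m → ℝ) → (Fin m → ℝ) → ℂ)
    (hG₁meas : Measurable (Function.uncurry G₁))
    (hG₂meas : Measurable (Function.uncurry G₂))
    (hG₁ : ∀ᵐ x₁ ∂(volume : Measure (Fin n → ℝ)), MemLp (G₁ x₁) p' volume)
    (hG₂ : ∀ᵐ x₂ ∂(volume : Measure (Fin m → ℝ)), MemLp (G₂ x₂) p' volume)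
    (hT₁ : ∃ C : ℝ≥0∞, C ≠ ∞ ∧ ∀ f : (Fin n → ℝ) → ℂ, MemLp f p volume →
      eLpNorm (intOp volume G₁ f) p volume ≤ C * eLpNorm f p volume)
    (hT₂ : ∃ C : ℝ≥0∞, C ≠ ∞ ∧ ∀ f : (Fin m → ℝ) → ℂ, MemLp f p volume →
      eLpNorm (intOp volume G₂ f) p volume ≤ C * eLpNorm f p volume) :
    (∃ C : ℝ≥0∞, C ≠ ∞ ∧ ∀ F : (Fin n → ℝ) × (Fin m → ℝ) → ℂ, MemLp F p volume →
      eLpNorm (intOp volume (fun x y => G₁ x.1 y.1 * G₂ x.2 y.2) F) p volume ≤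
        C * eLpNorm F p volume) ∧
    opNormLp (volume : Measure ((Fin n → ℝ) × (Fin m → ℝ))) p
        (intOp volume fun x y => G₁ x.1 y.1 * G₂ x.2 y.2) =
      opNormLp (volume : Measure (Fin n → ℝ)) p (intOp volume G₁) *
        opNormLp (volume : Measure (Fin m → ℝ)) p (intOp volume G₂) := by
  obtain ⟨C₁, hC₁t, hC₁⟩ := hT₁
  obtain ⟨C₂, hC₂t, hC₂⟩ := hT₂
  have hp0 : p ≠ 0 := fun h => by simp [h] at hp
  set N₁ := opNormLp (volume : Measure (Fin n → ℝ)) p (intOp volume G₁) with hN₁def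
  set N₂ := opNormLp (volume : Measure (Fin m → ℝ)) p (intOp volume G₂) with hN₂def
  have hN₁t : N₁ ≠ ∞ := ((opNormLp_le hC₁).trans_lt (lt_top_iff_ne_top.mpr hC₁t)).ne
  have hN₂t : N₂ ≠ ∞ := ((opNormLp_le hC₂).trans_lt (lt_top_iff_ne_top.mpr hC₂t)).ne
  have hB₁ : ∀ f : (Fin n → ℝ) → ℂ, MemLp f p volume →
      eLpNorm (intOp volume G₁ f) p volume ≤ N₁ * eLpNorm f p volume :=
    fun f hf => eLpNorm_intOp_le_opNormLp hp0 G₁ hf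
  have hB₂ : ∀ f : (Fin m → ℝ) → ℂ, MemLp f p volume →
      eLpNorm (intOp volume G₂ f) p volume ≤ N₂ * eLpNorm f p volume :=
    fun f hf => eLpNorm_intOp_le_opNormLp hp0 G₂ hf
  have key : ∀ F : (Fin n → ℝ) × (Fin m → ℝ) → ℂ, MemLp F p volume →
      eLpNorm (intOp volume (fun x y => G₁ x.1 y.1 * G₂ x.2 y.2) F) p volume ≤
        N₁ * N₂ * eLpNorm F p volume := by
    intro F hF
    rw [Measure.volume_eq_prod] at hF ⊢
    exact core_bound hp hp_top hpp' hG₁meas hG₂meas hG₁ hG₂ hN₁t hN₂t hB₁ hB₂ hF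
  refine ⟨⟨N₁ * N₂, ENNReal.mul_ne_top hN₁t hN₂t, key⟩, ?_⟩
  refine le_antisymm (opNormLp_le key) ?_
  -- lower bound: test on product functions
  have hle : ∀ r₁ ∈ {r : ℝ≥0∞ | ∃ f : (Fin n → ℝ) → ℂ, MemLp f p volume ∧
        eLpNorm f p volume ≠ 0 ∧ r = eLpNorm (intOp volume G₁ f) p volume / eLpNorm f p volume},
      ∀ r₂ ∈ {r : ℝ≥0∞ | ∃ f : (Fin m → ℝ) → ℂ, MemLp f p volume ∧
        eLpNorm f p volume ≠ 0 ∧ r = eLpNorm (intOp volume G₂ f) p volume / eLpNorm f p volume},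
      r₁ * r₂ ≤ opNormLp (volume : Measure ((Fin n → ℝ) × (Fin m → ℝ))) p
        (intOp volume fun x y => G₁ x.1 y.1 * G₂ x.2 y.2) := by
    rintro r₁ ⟨f, hf, hf0, rfl⟩ r₂ ⟨g, hg, hg0, rfl⟩
    -- replace by strongly measurable representatives
    set f' := hf.1.mk f with hf'def
    set g' := hg.1.mk g with hg'def
    have hff' : f =ᵐ[volume] f' := hf.1.ae_eq_mk
    have hgg' : g =ᵐ[volume] g' := hg.1.ae_eq_mk
    have hf' : MemLp f' p volume := hf.ae_eq hff'
    have hg' : MemLp g' p volume := hg.ae_eq hgg'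
    have hf'm : Measurable f' := hf.1.stronglyMeasurable_mk.measurable
    have hg'm : Measurable g' := hg.1.stronglyMeasurable_mk.measurable
    have hnf : eLpNorm f p volume = eLpNorm f' p volume := eLpNorm_congr_ae hff'
    have hng : eLpNorm g p volume = eLpNorm g' p volume := eLpNorm_congr_ae hgg'
    have hTf : intOp volume G₁ f = intOp volume G₁ f' := intOp_congr_fun hff'
    have hTg : intOp volume G₂ g = intOp volume G₂ g' := intOp_congr_fun hgg'
    rw [hnf, hng, hTf, hTg]
    set F : (Fin n → ℝ) × (Fin m → ℝ) → ℂ := fun z => f' z.1 * g' z.2 with hFdef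
    have hFsm : AEStronglyMeasurable F (volume : Measure ((Fin n → ℝ) × (Fin m → ℝ))) :=
      ((hf'm.comp measurable_fst).mul (hg'm.comp measurable_snd)).aestronglyMeasurable
    have hFnorm : eLpNorm F p volume = eLpNorm f' p volume * eLpNorm g' p volume := by
      rw [Measure.volume_eq_prod]
      exact eLpNorm_prod_mul hp0 hp_top hf'.1 hg'.1
    have hFmem : MemLp F p volume := by
      refine ⟨hFsm, ?_⟩
      rw [hFnorm]
      exact ENNReal.mul_lt_top hf'.eLpNorm_lt_top hg'.eLpNorm_lt_top
    have hF0 : eLpNorm F p volume ≠ 0 := by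
      rw [hFnorm]
      exact mul_ne_zero (hnf ▸ hf0) (hng ▸ hg0)
    -- the operator factors on products
    have hTu : AEStronglyMeasurable (intOp volume G₁ f') (volume : Measure (Fin n → ℝ)) := by
      have : Measurable fun w : (Fin n → ℝ) × (Fin n → ℝ) => G₁ w.1 w.2 * f' w.2 :=
        hG₁meas.mul (hf'm.comp measurable_snd)
      exact this.stronglyMeasurable.integral_prod_right'.aestronglyMeasurable
    have hTv : AEStronglyMeasurable (intOp volume G₂ g') (volume : Measure (Fin m → ℝ)) := by
      have : Measurable fun w : (Fin m → ℝ) × (Fin m → ℝ) => G₂ w.1 w.2 * g' w.2 :=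
        hG₂meas.mul (hg'm.comp measurable_snd)
      exact this.stronglyMeasurable.integral_prod_right'.aestronglyMeasurable
    have hTF : intOp volume (fun x y => G₁ x.1 y.1 * G₂ x.2 y.2) F
        = fun z => intOp volume G₁ f' z.1 * intOp volume G₂ g' z.2 := by
      funext z
      show ∫ y : (Fin n → ℝ) × (Fin m → ℝ), (G₁ z.1 y.1 * G₂ z.2 y.2) * (f' y.1 * g' y.2)
          ∂(volume) = intOp volume G₁ f' z.1 * intOp volume G₂ g' z.2
      rw [Measure.volume_eq_prod]
      have : ∀ y : (Fin n → ℝ) × (Fin m → ℝ),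
          (G₁ z.1 y.1 * G₂ z.2 y.2) * (f' y.1 * g' y.2)
            = (G₁ z.1 y.1 * f' y.1) * (G₂ z.2 y.2 * g' y.2) := fun y => mul_mul_mul_comm _ _ _ _
      rw [integral_congr_ae (Filter.Eventually.of_forall this)]
      exact integral_prod_mul (fun y₁ => G₁ z.1 y₁ * f' y₁) (fun y₂ => G₂ z.2 y₂ * g' y₂)
    have hTFnorm : eLpNorm (intOp volume (fun x y => G₁ x.1 y.1 * G₂ x.2 y.2) F) p volume
        = eLpNorm (intOp volume G₁ f') p volume * eLpNorm (intOp volume G₂ g') p volume := by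
      rw [hTF, Measure.volume_eq_prod]
      exact eLpNorm_prod_mul hp0 hp_top hTu hTv
    refine le_sSup ⟨F, hFmem, hF0, ?_⟩
    rw [hTFnorm, hFnorm,
      ennreal_div_mul_div (hnf ▸ hf0) hf'.eLpNorm_ne_top]
  calc N₁ * N₂
      = (⨆ r₁ ∈ {r : ℝ≥0∞ | ∃ f : (Fin n → ℝ) → ℂ, MemLp f p volume ∧
          eLpNorm f p volume ≠ 0 ∧
          r = eLpNorm (intOp volume G₁ f) p volume / eLpNorm f p volume}, r₁ * N₂) :=
        ENNReal.sSup_mul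
    _ ≤ opNormLp (volume : Measure ((Fin n → ℝ) × (Fin m → ℝ))) p
        (intOp volume fun x y => G₁ x.1 y.1 * G₂ x.2 y.2) := by
        refine iSup₂_le fun r₁ h₁ => ?_
        rw [hN₂def, opNormLp, ENNReal.mul_sSup]
        exact iSup₂_le fun r₂ h₂ => hle r₁ h₁ r₂ h₂
end

section
/- Let n ≥ 1, 1 < p < ∞, and α > 0. Let Q_α¹ denote the operator Q_α in complex dimension 1. Then the operator norm of Q_α on L^p(ℂⁿ, λ) factorizes as ‖Q_α‖_{p→p} = (‖Q_α¹‖_{p→p})ⁿ. -/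
open MeasureTheory Complex ENNReal

/-- The operator `Q_α F(z) = (α/π)ⁿ ∫ e^{−(α/2)(|z|² − 2⟨z,w⟩ + |w|²)} F(w) λ(dw)`,
where `⟨z,w⟩ = Σᵢ zᵢ conj(wᵢ)`. -/
noncomputable def Qop (n : ℕ) (α : ℝ) (F : (Fin n → ℂ) → ℂ) (z : Fin n → ℂ) : ℂ :=
  ((α / Real.pi) ^ n : ℝ) *
    ∫ w, Complex.exp (-(α / 2 : ℂ) *
        (((∑ i, Complex.normSq (z i) + ∑ i, Complex.normSq (w i) : ℝ) : ℂ) -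
          2 * ∑ i, z i * (starRingEnd ℂ) (w i))) * F w ∂volume

noncomputable section QAux
namespace QAux

/-- generic kernel operator -/
def kop {X : Type*} [MeasurableSpace X] (μ : Measure X) (c : ℝ) (k : X → X → ℂ)
    (f : X → ℂ) (x : X) : ℂ := (c : ℂ) * ∫ w, k x w * f w ∂μ

variable {X : Type*} [MeasurableSpace X] {μ : Measure X} {p q : ℝ}

lemma conj_div_eq (hpq : p.HolderConjugate q) :
    (1 : ℝ≥0∞) / 1 = 1 / ENNReal.ofReal q + 1 / ENNReal.ofReal p := by
  have hp : 0 < p := hpq.pos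
  have hq : 0 < q := hpq.symm.pos
  rw [div_one, one_div, one_div, ← ENNReal.ofReal_inv_of_pos hq,
    ← ENNReal.ofReal_inv_of_pos hp, ← ENNReal.ofReal_add (by positivity) (by positivity)]
  rw [← ENNReal.ofReal_one]
  congr 1
  have := hpq.inv_add_inv_eq_one
  linarith

lemma kop_congr_ae {c : ℝ} {k : X → X → ℂ} {f g : X → ℂ} (h : f =ᵐ[μ] g) :
    kop μ c k f = kop μ c k g := by
  funext x
  unfold kop
  congr 1
  exact integral_congr_ae (h.mono fun w hw => by dsimp only; rw [hw])

lemma integrable_kop_kernel {c : ℝ} {k : X → X → ℂ} {f : X → ℂ}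
    (hpq : p.HolderConjugate q) (hkq : ∀ x, MemLp (k x) (ENNReal.ofReal q) μ)
    (hf : MemLp f (ENNReal.ofReal p) μ) (x : X) :
    Integrable (fun w => k x w * f w) μ := by
  have h := hf.smul (hkq x) (r := 1) (hpqr := ⟨by simpa [one_div] using (conj_div_eq hpq).symm⟩)
  rw [memLp_one_iff_integrable] at h
  exact h

lemma kop_zero {c : ℝ} {k : X → X → ℂ} {f : X → ℂ} {r : ℝ≥0∞} (hr : r ≠ 0)
    (hf : AEStronglyMeasurable f μ) (h : eLpNorm f r μ = 0) :
    kop μ c k f = 0 := by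
  have h0 : f =ᵐ[μ] 0 := (eLpNorm_eq_zero_iff hf hr).mp h
  have : kop μ c k f = kop μ c k 0 := kop_congr_ae h0
  rw [this]
  funext x
  simp [kop]

lemma kop_stronglyMeasurable [SFinite μ] {c : ℝ} {k : X → X → ℂ} {f : X → ℂ}
    (hk : StronglyMeasurable (Function.uncurry k)) (hf : StronglyMeasurable f) :
    StronglyMeasurable (kop μ c k f) := by
  have h : StronglyMeasurable fun x => ∫ w, k x w * f w ∂μ := by
    apply StronglyMeasurable.integral_prod_right' (f := fun zw : X × X => k zw.1 zw.2 * f zw.2)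
    exact hk.mul (hf.comp_measurable measurable_snd)
  exact stronglyMeasurable_const.mul h

lemma kop_eq_sm [SFinite μ] {c : ℝ} {k : X → X → ℂ} {f : X → ℂ}
    (hk : StronglyMeasurable (Function.uncurry k)) (hf : AEStronglyMeasurable f μ) :
    ∃ g, StronglyMeasurable g ∧ kop μ c k f = g :=
  ⟨kop μ c k (hf.mk f), kop_stronglyMeasurable hk hf.stronglyMeasurable_mk,
    kop_congr_ae hf.ae_eq_mk⟩

lemma kop_aesm [SFinite μ] {c : ℝ} {k : X → X → ℂ} {f : X → ℂ} {ξ : Measure X}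
    (hk : StronglyMeasurable (Function.uncurry k)) (hf : AEStronglyMeasurable f μ) :
    AEStronglyMeasurable (kop μ c k f) ξ := by
  obtain ⟨g, hg, hfg⟩ := kop_eq_sm (μ := μ) (c := c) hk hf
  rw [hfg]
  exact hg.aestronglyMeasurable

lemma eLpNorm_kop_le {c : ℝ} {k : X → X → ℂ} {f : X → ℂ} {r : ℝ≥0∞} (hr : r ≠ 0)
    (hf : MemLp f r μ) :
    eLpNorm (kop μ c k f) r μ ≤ opNormLp μ r (kop μ c k) * eLpNorm f r μ := by
  by_cases h0 : eLpNorm f r μ = 0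
  · rw [kop_zero hr hf.1 h0, h0, mul_zero]
    simp
  · have hmem : eLpNorm (kop μ c k f) r μ / eLpNorm f r μ ∈
        {r' : ℝ≥0∞ | ∃ g : X → ℂ, MemLp g r μ ∧ eLpNorm g r μ ≠ 0 ∧
          r' = eLpNorm (kop μ c k g) r μ / eLpNorm g r μ} := ⟨f, hf, h0, rfl⟩
    have hle : eLpNorm (kop μ c k f) r μ / eLpNorm f r μ ≤ opNormLp μ r (kop μ c k) :=
      le_sSup hmem
    rw [ENNReal.div_le_iff h0 hf.eLpNorm_ne_top] at hle
    exact hle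

end QAux

namespace QAux
open Function

variable {X Y : Type*} [MeasurableSpace X] [MeasurableSpace Y]
  {μ : Measure X} {ν : Measure Y} [SigmaFinite μ] [SigmaFinite ν] {p q : ℝ}

lemma eLpNorm_prod_mul {f : X → ℂ} {g : Y → ℂ} {r : ℝ≥0∞} (hr0 : r ≠ 0) (hrt : r ≠ ∞)
    (hf : AEStronglyMeasurable f μ) (hg : AEStronglyMeasurable g ν) :
    eLpNorm (fun z : X × Y => f z.1 * g z.2) r (μ.prod ν) = eLpNorm f r μ * eLpNorm g r ν := by
  have ht : 0 < r.toReal := ENNReal.toReal_pos hr0 hrt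
  rw [eLpNorm_eq_lintegral_rpow_enorm_toReal hr0 hrt, eLpNorm_eq_lintegral_rpow_enorm_toReal hr0 hrt,
    eLpNorm_eq_lintegral_rpow_enorm_toReal hr0 hrt]
  simp only [enorm_eq_nnnorm]
  have h1 : ∀ z : X × Y, ((‖f z.1 * g z.2‖₊ : ℝ≥0∞)) ^ r.toReal
      = (fun x => (‖f x‖₊ : ℝ≥0∞) ^ r.toReal) z.1 * (fun y => (‖g y‖₊ : ℝ≥0∞) ^ r.toReal) z.2 :=
    fun z => by
      simp only
      rw [nnnorm_mul, ENNReal.coe_mul, ENNReal.mul_rpow_of_nonneg _ _ ht.le]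
  simp_rw [h1]
  rw [lintegral_prod_mul (f := fun x => (‖f x‖₊ : ℝ≥0∞) ^ r.toReal) (g := fun y => (‖g y‖₊ : ℝ≥0∞) ^ r.toReal)
      (hf.enorm.pow_const _) (hg.enorm.pow_const _),
    ENNReal.mul_rpow_of_nonneg _ _ (by positivity : (0:ℝ) ≤ 1 / r.toReal)]

lemma memℒp_prod_mul {f : X → ℂ} {g : Y → ℂ} {r : ℝ≥0∞} (hr0 : r ≠ 0) (hrt : r ≠ ∞)
    (hf : MemLp f r μ) (hg : MemLp g r ν) :
    MemLp (fun z : X × Y => f z.1 * g z.2) r (μ.prod ν) := by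
  constructor
  · exact (hf.1.comp_quasiMeasurePreserving Measure.quasiMeasurePreserving_fst).mul
      (hg.1.comp_quasiMeasurePreserving Measure.quasiMeasurePreserving_snd)
  · rw [eLpNorm_prod_mul hr0 hrt hf.1 hg.1]
    exact ENNReal.mul_lt_top hf.2 hg.2

variable {c₁ c₂ : ℝ} {k₁ : X → X → ℂ} {k₂ : Y → Y → ℂ}

/-- product kernel -/
def pk (k₁ : X → X → ℂ) (k₂ : Y → Y → ℂ) (z w : X × Y) : ℂ := k₁ z.1 w.1 * k₂ z.2 w.2

lemma pk_sm (hk₁ : StronglyMeasurable (uncurry k₁)) (hk₂ : StronglyMeasurable (uncurry k₂)) :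
    StronglyMeasurable (uncurry (pk k₁ k₂)) := by
  have m₁ : Measurable fun zw : (X × Y) × (X × Y) => (zw.1.1, zw.2.1) :=
    (measurable_fst.fst.prodMk measurable_snd.fst)
  have m₂ : Measurable fun zw : (X × Y) × (X × Y) => (zw.1.2, zw.2.2) :=
    (measurable_fst.snd.prodMk measurable_snd.snd)
  exact (hk₁.comp_measurable m₁).mul (hk₂.comp_measurable m₂)

lemma pk_memℒp {r : ℝ≥0∞} (hr0 : r ≠ 0) (hrt : r ≠ ∞)
    (hkq₁ : ∀ x, MemLp (k₁ x) r μ) (hkq₂ : ∀ y, MemLp (k₂ y) r ν) (z : X × Y) :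
    MemLp (pk k₁ k₂ z) r (μ.prod ν) :=
  memℒp_prod_mul hr0 hrt (hkq₁ z.1) (hkq₂ z.2)

/-- Fubini for the product kernel operator. -/
lemma kop_prod_eq (hpq : p.HolderConjugate q)
    (hkq₁ : ∀ x, MemLp (k₁ x) (ENNReal.ofReal q) μ)
    (hkq₂ : ∀ y, MemLp (k₂ y) (ENNReal.ofReal q) ν)
    {F : X × Y → ℂ} (hF : MemLp F (ENNReal.ofReal p) (μ.prod ν)) (z : X × Y) :
    kop (μ.prod ν) (c₁ * c₂) (pk k₁ k₂) F z
      = kop ν c₂ k₂ (fun y' => kop μ c₁ k₁ (fun x' => F (x', y')) z.1) z.2 := by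
  obtain ⟨x, y⟩ := z
  have hq0 : (ENNReal.ofReal q) ≠ 0 := (ENNReal.ofReal_pos.mpr hpq.symm.pos).ne'
  have hqt : (ENNReal.ofReal q) ≠ ∞ := ENNReal.ofReal_ne_top
  have hint : Integrable (fun w : X × Y => pk k₁ k₂ (x, y) w * F w) (μ.prod ν) :=
    integrable_kop_kernel (c := c₁ * c₂) hpq (pk_memℒp hq0 hqt hkq₁ hkq₂) hF (x, y)
  unfold kop
  rw [integral_prod_symm _ hint]
  have inner : ∀ y', (∫ x', pk k₁ k₂ (x, y) (x', y') * F (x', y') ∂μ)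
      = k₂ y y' * ∫ x', k₁ x x' * F (x', y') ∂μ := by
    intro y'
    rw [← integral_const_mul]
    congr 1; funext x'
    simp only [pk]; ring
  simp_rw [inner]
  have hc : ∀ y', k₂ y y' * ((c₁ : ℂ) * ∫ x', k₁ x x' * F (x', y') ∂μ)
      = (c₁ : ℂ) * (k₂ y y' * ∫ x', k₁ x x' * F (x', y') ∂μ) := fun y' => by ring
  simp_rw [hc, integral_const_mul]
  push_cast
  ring

lemma A_aesm (hk₁ : StronglyMeasurable (uncurry k₁)) {F : X × Y → ℂ}
    (hF : AEStronglyMeasurable F (μ.prod ν)) :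
    AEStronglyMeasurable (fun z : X × Y => kop μ c₁ k₁ (fun x' => F (x', z.2)) z.1) (μ.prod ν) := by
  set F' := hF.mk F with hF'def
  have hF' : StronglyMeasurable F' := hF.stronglyMeasurable_mk
  have heq : F =ᵐ[μ.prod ν] F' := hF.ae_eq_mk
  have hswap : ∀ᵐ z ∂(ν.prod μ), F z.swap = F' z.swap :=
    (Measure.measurePreserving_swap).quasiMeasurePreserving.ae heq
  have hae : ∀ᵐ y ∂ν, (fun x => F (x, y)) =ᵐ[μ] (fun x => F' (x, y)) := by
    have h2 := Measure.ae_ae_of_ae_prod hswap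
    simpa [Prod.swap, Filter.EventuallyEq] using h2
  have hA' : StronglyMeasurable fun z : X × Y => kop μ c₁ k₁ (fun x' => F' (x', z.2)) z.1 := by
    have hsm : StronglyMeasurable fun zw : (X × Y) × X => k₁ zw.1.1 zw.2 * F' (zw.2, zw.1.2) :=
      (hk₁.comp_measurable (measurable_fst.fst.prodMk measurable_snd)).mul
        (hF'.comp_measurable (measurable_snd.prodMk measurable_fst.snd))
    exact stronglyMeasurable_const.mul hsm.integral_prod_right'
  refine ⟨_, hA', ?_⟩
  have hlift : ∀ᵐ z ∂(μ.prod ν), (fun x' => F (x', z.2)) =ᵐ[μ] (fun x' => F' (x', z.2)) :=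
    Measure.quasiMeasurePreserving_snd.ae hae
  exact hlift.mono fun z hz => congrFun (kop_congr_ae hz) z.1

end QAux
namespace QAux
open Function

variable {X Y : Type*} [MeasurableSpace X] [MeasurableSpace Y]
  {μ : Measure X} {ν : Measure Y} [SigmaFinite μ] [SigmaFinite ν] {p q : ℝ}
variable {c₁ c₂ : ℝ} {k₁ : X → X → ℂ} {k₂ : Y → Y → ℂ}

lemma eLpNorm_A_le (hp : 1 < p) (hk₁ : StronglyMeasurable (uncurry k₁))
    {F : X × Y → ℂ} (hF : MemLp F (ENNReal.ofReal p) (μ.prod ν)) :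
    eLpNorm (fun z : X × Y => kop μ c₁ k₁ (fun x' => F (x', z.2)) z.1) (ENNReal.ofReal p) (μ.prod ν)
      ≤ opNormLp μ (ENNReal.ofReal p) (kop μ c₁ k₁)
        * eLpNorm F (ENNReal.ofReal p) (μ.prod ν) := by
  set p' : ℝ≥0∞ := ENNReal.ofReal p with hp'def
  have hp'0 : p' ≠ 0 := (ENNReal.ofReal_pos.mpr (by linarith)).ne'
  have hp't : p' ≠ ∞ := ENNReal.ofReal_ne_top
  set t : ℝ := p'.toReal with htdef
  have ht : 0 < t := ENNReal.toReal_pos hp'0 hp't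
  set N := opNormLp μ p' (kop μ c₁ k₁) with hNdef
  -- measurable representative
  set F' := hF.1.mk F with hF'def
  have hF' : StronglyMeasurable F' := hF.1.stronglyMeasurable_mk
  have heq : F =ᵐ[μ.prod ν] F' := hF.1.ae_eq_mk
  have hF'mem : MemLp F' p' (μ.prod ν) := hF.ae_eq heq
  have hswap : ∀ᵐ z ∂(ν.prod μ), F z.swap = F' z.swap :=
    (Measure.measurePreserving_swap).quasiMeasurePreserving.ae heq
  have hae : ∀ᵐ y ∂ν, (fun x => F (x, y)) =ᵐ[μ] (fun x => F' (x, y)) := by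
    have h2 := Measure.ae_ae_of_ae_prod hswap
    simpa [Prod.swap, Filter.EventuallyEq] using h2
  have hA' : StronglyMeasurable fun z : X × Y => kop μ c₁ k₁ (fun x' => F' (x', z.2)) z.1 := by
    have hsm : StronglyMeasurable fun zw : (X × Y) × X => k₁ zw.1.1 zw.2 * F' (zw.2, zw.1.2) :=
      (hk₁.comp_measurable (measurable_fst.fst.prodMk measurable_snd)).mul
        (hF'.comp_measurable (measurable_snd.prodMk measurable_fst.snd))
    exact stronglyMeasurable_const.mul hsm.integral_prod_right'
  have hAA' : (fun z : X × Y => kop μ c₁ k₁ (fun x' => F (x', z.2)) z.1)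
      =ᵐ[μ.prod ν] (fun z : X × Y => kop μ c₁ k₁ (fun x' => F' (x', z.2)) z.1) :=
    (Measure.quasiMeasurePreserving_snd.ae hae).mono fun z hz =>
      congrFun (kop_congr_ae hz) z.1
  rw [eLpNorm_congr_ae hAA', eLpNorm_congr_ae heq]
  by_cases hN : N = ∞
  · by_cases h0 : eLpNorm F' p' (μ.prod ν) = 0
    · -- F' a.e. zero, so the left side vanishes
      have hz : F' =ᵐ[μ.prod ν] 0 := (eLpNorm_eq_zero_iff hF'.aestronglyMeasurable hp'0).mp h0
      have hswap0 : ∀ᵐ z ∂(ν.prod μ), F' z.swap = 0 :=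
        (Measure.measurePreserving_swap).quasiMeasurePreserving.ae hz
      have hae0 : ∀ᵐ y ∂ν, (fun x => F' (x, y)) =ᵐ[μ] (0 : X → ℂ) := by
        have h2 := Measure.ae_ae_of_ae_prod hswap0
        simpa [Prod.swap, Filter.EventuallyEq] using h2
      have hA0 : (fun z : X × Y => kop μ c₁ k₁ (fun x' => F' (x', z.2)) z.1)
          =ᵐ[μ.prod ν] 0 := by
        refine (Measure.quasiMeasurePreserving_snd.ae hae0).mono fun z hz2 => ?_
        have h3 : kop μ c₁ k₁ (fun x' => F' (x', z.2)) = kop μ c₁ k₁ (0 : X → ℂ) :=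
          kop_congr_ae hz2
        have h4 : kop μ c₁ k₁ (0 : X → ℂ) = 0 := by
          funext u; simp [kop]
        show kop μ c₁ k₁ (fun x' => F' (x', z.2)) z.1 = 0
        rw [h3, h4]; rfl
      rw [eLpNorm_congr_ae hA0, h0, mul_zero]
      simp
    · rw [hN, ENNReal.top_mul h0]
      exact le_top
  -- main case: N finite
  rw [eLpNorm_eq_lintegral_rpow_enorm_toReal hp'0 hp't, eLpNorm_eq_lintegral_rpow_enorm_toReal hp'0 hp't]
  have hmeasA : AEMeasurable
      (fun z : X × Y => ((‖kop μ c₁ k₁ (fun x' => F' (x', z.2)) z.1‖₊ : ℝ≥0∞)) ^ t)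
      (μ.prod ν) := (hA'.measurable.enorm.pow_const t).aemeasurable
  have hmeasF : AEMeasurable (fun z : X × Y => ((‖F' z‖₊ : ℝ≥0∞)) ^ t) (μ.prod ν) :=
    (hF'.measurable.enorm.pow_const t).aemeasurable
  suffices key : (∫⁻ z, (‖kop μ c₁ k₁ (fun x' => F' (x', z.2)) z.1‖₊ : ℝ≥0∞) ^ t ∂(μ.prod ν))
      ≤ N ^ t * ∫⁻ z, (‖F' z‖₊ : ℝ≥0∞) ^ t ∂(μ.prod ν) by
    calc (∫⁻ z, (‖kop μ c₁ k₁ (fun x' => F' (x', z.2)) z.1‖₊ : ℝ≥0∞) ^ t ∂(μ.prod ν)) ^ (1/t)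
        ≤ (N ^ t * ∫⁻ z, (‖F' z‖₊ : ℝ≥0∞) ^ t ∂(μ.prod ν)) ^ (1/t) :=
          ENNReal.rpow_le_rpow key (by positivity)
      _ = N * (∫⁻ z, (‖F' z‖₊ : ℝ≥0∞) ^ t ∂(μ.prod ν)) ^ (1/t) := by
          rw [ENNReal.mul_rpow_of_nonneg _ _ (by positivity : (0:ℝ) ≤ 1/t),
            ← ENNReal.rpow_mul, mul_one_div, div_self ht.ne', ENNReal.rpow_one]
  rw [lintegral_prod_symm _ hmeasA, lintegral_prod_symm _ hmeasF]
  have hFtot : (∫⁻ y, ∫⁻ x, (‖F' (x, y)‖₊ : ℝ≥0∞) ^ t ∂μ ∂ν) ≠ ∞ := by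
    rw [← lintegral_prod_symm _ hmeasF]
    intro h
    have h5 := hF'mem.eLpNorm_lt_top
    rw [eLpNorm_eq_lintegral_rpow_enorm_toReal hp'0 hp't, ← htdef] at h5
    simp only [enorm_eq_nnnorm] at h5
    rw [h,
      ENNReal.top_rpow_of_pos (by positivity)] at h5
    exact (lt_irrefl _ h5)
  have hinner_meas : Measurable fun y => ∫⁻ x, (‖F' (x, y)‖₊ : ℝ≥0∞) ^ t ∂μ :=
    Measurable.lintegral_prod_left' (hF'.measurable.enorm.pow_const t)
  have hslicefin : ∀ᵐ y ∂ν, (∫⁻ x, (‖F' (x, y)‖₊ : ℝ≥0∞) ^ t ∂μ) < ∞ :=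
    ae_lt_top hinner_meas hFtot
  have hmain : ∀ᵐ y ∂ν, (∫⁻ x, (‖kop μ c₁ k₁ (fun x' => F' (x', y)) x‖₊ : ℝ≥0∞) ^ t ∂μ)
      ≤ N ^ t * ∫⁻ x, (‖F' (x, y)‖₊ : ℝ≥0∞) ^ t ∂μ := by
    filter_upwards [hslicefin] with y hy
    have hmemslice : MemLp (fun x => F' (x, y)) p' μ := by
      refine ⟨(hF'.comp_measurable (measurable_id.prodMk measurable_const)).aestronglyMeasurable, ?_⟩
      rw [eLpNorm_eq_lintegral_rpow_enorm_toReal hp'0 hp't, ← htdef]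
      exact ENNReal.rpow_lt_top_of_nonneg (by positivity) hy.ne
    have hb := eLpNorm_kop_le (c := c₁) (k := k₁) hp'0 hmemslice
    have h2 : (∫⁻ x, (‖kop μ c₁ k₁ (fun x' => F' (x', y)) x‖₊ : ℝ≥0∞) ^ t ∂μ)
        = (eLpNorm (kop μ c₁ k₁ (fun x' => F' (x', y))) p' μ) ^ t := by
      rw [eLpNorm_eq_lintegral_rpow_enorm_toReal hp'0 hp't, ← htdef, ← ENNReal.rpow_mul,
        one_div, inv_mul_cancel₀ ht.ne', ENNReal.rpow_one]
      simp only [enorm_eq_nnnorm]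
    have h3 : (eLpNorm (fun x => F' (x, y)) p' μ) ^ t
        = ∫⁻ x, (‖F' (x, y)‖₊ : ℝ≥0∞) ^ t ∂μ := by
      rw [eLpNorm_eq_lintegral_rpow_enorm_toReal hp'0 hp't, ← htdef, ← ENNReal.rpow_mul,
        one_div, inv_mul_cancel₀ ht.ne', ENNReal.rpow_one]
      simp only [enorm_eq_nnnorm]
    calc (∫⁻ x, (‖kop μ c₁ k₁ (fun x' => F' (x', y)) x‖₊ : ℝ≥0∞) ^ t ∂μ)
        = (eLpNorm (kop μ c₁ k₁ (fun x' => F' (x', y))) p' μ) ^ t := h2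
      _ ≤ (N * eLpNorm (fun x => F' (x, y)) p' μ) ^ t := ENNReal.rpow_le_rpow hb ht.le
      _ = N ^ t * (eLpNorm (fun x => F' (x, y)) p' μ) ^ t :=
          ENNReal.mul_rpow_of_nonneg _ _ ht.le
      _ = N ^ t * ∫⁻ x, (‖F' (x, y)‖₊ : ℝ≥0∞) ^ t ∂μ := by rw [h3]
  calc (∫⁻ y, ∫⁻ x, (‖kop μ c₁ k₁ (fun x' => F' (x', y)) x‖₊ : ℝ≥0∞) ^ t ∂μ ∂ν)
      ≤ ∫⁻ y, N ^ t * ∫⁻ x, (‖F' (x, y)‖₊ : ℝ≥0∞) ^ t ∂μ ∂ν := lintegral_mono_ae hmain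
    _ = N ^ t * ∫⁻ y, ∫⁻ x, (‖F' (x, y)‖₊ : ℝ≥0∞) ^ t ∂μ ∂ν :=
        lintegral_const_mul' _ _ (ENNReal.rpow_ne_top_of_nonneg ht.le hN)

end QAux
namespace QAux
open Function

variable {X Y : Type*} [MeasurableSpace X] [MeasurableSpace Y]
  {μ : Measure X} {ν : Measure Y} [SigmaFinite μ] [SigmaFinite ν] {p q : ℝ}
variable {c₁ c₂ : ℝ} {k₁ : X → X → ℂ} {k₂ : Y → Y → ℂ}

lemma eLpNorm_B_le (hp : 1 < p) (hk₂ : StronglyMeasurable (uncurry k₂))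
    {G : X × Y → ℂ} (hG : MemLp G (ENNReal.ofReal p) (μ.prod ν)) :
    eLpNorm (fun z : X × Y => kop ν c₂ k₂ (fun y' => G (z.1, y')) z.2) (ENNReal.ofReal p) (μ.prod ν)
      ≤ opNormLp ν (ENNReal.ofReal p) (kop ν c₂ k₂)
        * eLpNorm G (ENNReal.ofReal p) (μ.prod ν) := by
  have hGs : MemLp (fun z : Y × X => G z.swap) (ENNReal.ofReal p) (ν.prod μ) :=
    hG.comp_measurePreserving Measure.measurePreserving_swap
  have hA := eLpNorm_A_le (μ := ν) (ν := μ) (c₁ := c₂) (k₁ := k₂) hp hk₂ hGs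
  have haesm : AEStronglyMeasurable
      (fun z : Y × X => kop ν c₂ k₂ (fun y' => G (z.2, y')) z.1) (ν.prod μ) :=
    A_aesm (μ := ν) (ν := μ) (c₁ := c₂) (k₁ := k₂) hk₂ hGs.1
  calc eLpNorm (fun z : X × Y => kop ν c₂ k₂ (fun y' => G (z.1, y')) z.2)
        (ENNReal.ofReal p) (μ.prod ν)
      = eLpNorm ((fun z : Y × X => kop ν c₂ k₂ (fun y' => G (z.2, y')) z.1) ∘ Prod.swap)
          (ENNReal.ofReal p) (μ.prod ν) := rfl
    _ = eLpNorm (fun z : Y × X => kop ν c₂ k₂ (fun y' => G (z.2, y')) z.1)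
          (ENNReal.ofReal p) (ν.prod μ) :=
        eLpNorm_comp_measurePreserving haesm Measure.measurePreserving_swap
    _ ≤ opNormLp ν (ENNReal.ofReal p) (kop ν c₂ k₂)
          * eLpNorm (fun z : Y × X => G z.swap) (ENNReal.ofReal p) (ν.prod μ) := hA
    _ = opNormLp ν (ENNReal.ofReal p) (kop ν c₂ k₂)
          * eLpNorm G (ENNReal.ofReal p) (μ.prod ν) := by
        rw [show (fun z : Y × X => G z.swap) = G ∘ Prod.swap from rfl,
          eLpNorm_comp_measurePreserving hG.1 Measure.measurePreserving_swap]

theorem opNorm_prod_le (hpq : p.HolderConjugate q)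
    (hk₁ : StronglyMeasurable (uncurry k₁)) (hk₂ : StronglyMeasurable (uncurry k₂))
    (hkq₁ : ∀ x, MemLp (k₁ x) (ENNReal.ofReal q) μ)
    (hkq₂ : ∀ y, MemLp (k₂ y) (ENNReal.ofReal q) ν)
    (hN₂0 : opNormLp ν (ENNReal.ofReal p) (kop ν c₂ k₂) ≠ 0) :
    opNormLp (μ.prod ν) (ENNReal.ofReal p) (kop (μ.prod ν) (c₁ * c₂) (pk k₁ k₂))
      ≤ opNormLp μ (ENNReal.ofReal p) (kop μ c₁ k₁)
        * opNormLp ν (ENNReal.ofReal p) (kop ν c₂ k₂) := by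
  have hp : 1 < p := hpq.lt
  apply sSup_le
  rintro r ⟨F, hF, hF0, rfl⟩
  by_cases hN₁ : opNormLp μ (ENNReal.ofReal p) (kop μ c₁ k₁) = ∞
  · rw [hN₁, ENNReal.top_mul hN₂0]
    exact le_top
  have hfub : kop (μ.prod ν) (c₁ * c₂) (pk k₁ k₂) F
      = fun z : X × Y => kop ν c₂ k₂
          (fun y' => kop μ c₁ k₁ (fun x' => F (x', y')) z.1) z.2 :=
    funext (kop_prod_eq hpq hkq₁ hkq₂ hF)
  rw [hfub]
  have hAmem : MemLp (fun z : X × Y => kop μ c₁ k₁ (fun x' => F (x', z.2)) z.1)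
      (ENNReal.ofReal p) (μ.prod ν) :=
    ⟨A_aesm hk₁ hF.1, lt_of_le_of_lt (eLpNorm_A_le hp hk₁ hF)
      (ENNReal.mul_lt_top (lt_top_iff_ne_top.mpr hN₁) hF.eLpNorm_lt_top)⟩
  have h1 := eLpNorm_B_le (c₂ := c₂) (k₂ := k₂) hp hk₂ hAmem
  have h2 := eLpNorm_A_le (c₁ := c₁) (k₁ := k₁) hp hk₁ hF
  refine (ENNReal.div_le_iff hF0 hF.eLpNorm_ne_top).mpr ?_
  calc eLpNorm (fun z : X × Y => kop ν c₂ k₂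
          (fun y' => kop μ c₁ k₁ (fun x' => F (x', y')) z.1) z.2)
        (ENNReal.ofReal p) (μ.prod ν)
      ≤ opNormLp ν (ENNReal.ofReal p) (kop ν c₂ k₂)
          * eLpNorm (fun z : X × Y => kop μ c₁ k₁ (fun x' => F (x', z.2)) z.1)
            (ENNReal.ofReal p) (μ.prod ν) := h1
    _ ≤ opNormLp ν (ENNReal.ofReal p) (kop ν c₂ k₂)
          * (opNormLp μ (ENNReal.ofReal p) (kop μ c₁ k₁)
            * eLpNorm F (ENNReal.ofReal p) (μ.prod ν)) := mul_le_mul_right h2 _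
    _ = opNormLp μ (ENNReal.ofReal p) (kop μ c₁ k₁)
          * opNormLp ν (ENNReal.ofReal p) (kop ν c₂ k₂)
          * eLpNorm F (ENNReal.ofReal p) (μ.prod ν) := by ring

theorem le_opNorm_prod (hp0 : (ENNReal.ofReal p) ≠ 0)
    (hk₁ : StronglyMeasurable (uncurry k₁)) (hk₂ : StronglyMeasurable (uncurry k₂)) :
    opNormLp μ (ENNReal.ofReal p) (kop μ c₁ k₁)
        * opNormLp ν (ENNReal.ofReal p) (kop ν c₂ k₂)
      ≤ opNormLp (μ.prod ν) (ENNReal.ofReal p) (kop (μ.prod ν) (c₁ * c₂) (pk k₁ k₂)) := by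
  have hpt : (ENNReal.ofReal p) ≠ ∞ := ENNReal.ofReal_ne_top
  unfold opNormLp
  rw [ENNReal.sSup_mul]
  refine iSup₂_le fun r₁ hr₁ => ?_
  rw [mul_sSup]
  refine iSup₂_le fun r₂ hr₂ => ?_
  obtain ⟨f₁, hf₁, h01, rfl⟩ := hr₁
  obtain ⟨f₂, hf₂, h02, rfl⟩ := hr₂
  apply le_sSup
  refine ⟨fun z : X × Y => f₁ z.1 * f₂ z.2, memℒp_prod_mul hp0 hpt hf₁ hf₂, ?_, ?_⟩
  · rw [eLpNorm_prod_mul hp0 hpt hf₁.1 hf₂.1]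
    exact mul_ne_zero h01 h02
  · have hTf : kop (μ.prod ν) (c₁ * c₂) (pk k₁ k₂) (fun z : X × Y => f₁ z.1 * f₂ z.2)
        = fun z : X × Y => (kop μ c₁ k₁ f₁ z.1) * (kop ν c₂ k₂ f₂ z.2) := by
      funext z
      unfold kop pk
      have hip : (∫ w : X × Y, (k₁ z.1 w.1 * f₁ w.1) * (k₂ z.2 w.2 * f₂ w.2) ∂μ.prod ν)
          = (∫ w, k₁ z.1 w * f₁ w ∂μ) * ∫ w, k₂ z.2 w * f₂ w ∂ν :=
        integral_prod_mul (f := fun a => k₁ z.1 a * f₁ a) (g := fun b => k₂ z.2 b * f₂ b)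
      rw [show (fun w : X × Y => (k₁ z.1 w.1 * k₂ z.2 w.2) * (f₁ w.1 * f₂ w.2))
          = fun w : X × Y => (k₁ z.1 w.1 * f₁ w.1) * (k₂ z.2 w.2 * f₂ w.2)
          from funext fun w => by ring, hip]
      push_cast
      ring
    rw [hTf, eLpNorm_prod_mul hp0 hpt (kop_aesm hk₁ hf₁.1) (kop_aesm hk₂ hf₂.1),
      eLpNorm_prod_mul hp0 hpt hf₁.1 hf₂.1, div_eq_mul_inv, div_eq_mul_inv, div_eq_mul_inv,
      ENNReal.mul_inv (Or.inl h01) (Or.inl hf₁.eLpNorm_ne_top)]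
    ring

lemma opNormLp_conj {μ : Measure X} {ν : Measure Y} (e : X ≃ᵐ Y)
    (hpres : MeasurePreserving (⇑e) μ ν)
    {T : (X → ℂ) → X → ℂ} {T' : (Y → ℂ) → Y → ℂ} {r : ℝ≥0∞}
    (hT' : ∀ g : Y → ℂ, T' g = (T (g ∘ e)) ∘ e.symm)
    (hTsm : ∀ f : X → ℂ, MemLp f r μ → AEStronglyMeasurable (T f) μ) :
    opNormLp ν r T' = opNormLp μ r T := by
  have hsymm : MeasurePreserving (⇑e.symm) ν μ := hpres.symm e
  unfold opNormLp
  congr 1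
  ext s
  constructor
  · rintro ⟨g, hg, hg0, rfl⟩
    have hge : MemLp (g ∘ e) r μ := hg.comp_measurePreserving hpres
    refine ⟨g ∘ e, hge, ?_, ?_⟩
    · rw [eLpNorm_comp_measurePreserving hg.1 hpres]
      exact hg0
    · rw [hT' g, eLpNorm_comp_measurePreserving (hTsm _ hge) hsymm,
        eLpNorm_comp_measurePreserving hg.1 hpres]
  · rintro ⟨f, hf, hf0, rfl⟩
    have hfe : MemLp (f ∘ e.symm) r ν := hf.comp_measurePreserving hsymm
    have hcomp : (f ∘ ⇑e.symm) ∘ ⇑e = f := by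
      funext x
      simp
    refine ⟨f ∘ e.symm, hfe, ?_, ?_⟩
    · rw [eLpNorm_comp_measurePreserving hf.1 hsymm]
      exact hf0
    · rw [hT' (f ∘ e.symm), hcomp, eLpNorm_comp_measurePreserving (hTsm f hf) hsymm,
        eLpNorm_comp_measurePreserving hf.1 hsymm]

end QAux
namespace QAux
open Function Real

/-- 1-dimensional kernel -/
def Kc (α : ℝ) (z w : ℂ) : ℂ :=
  Complex.exp (-(α / 2 : ℂ) * (((Complex.normSq z + Complex.normSq w : ℝ) : ℂ)
    - 2 * (z * (starRingEnd ℂ) w)))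

/-- n-dimensional kernel -/
def Kn (n : ℕ) (α : ℝ) (z w : Fin n → ℂ) : ℂ := ∏ i, Kc α (z i) (w i)

lemma Qop_eq_kop (n : ℕ) (α : ℝ) :
    Qop n α = kop (volume : Measure (Fin n → ℂ)) ((α / Real.pi) ^ n) (Kn n α) := by
  funext F z
  unfold Qop kop Kn Kc
  push_cast
  congr 1
  refine integral_congr_ae (Filter.Eventually.of_forall fun w => ?_)
  simp only
  congr 1
  rw [← Complex.exp_sum]
  congr 1
  rw [← Finset.mul_sum]
  rw [Finset.sum_sub_distrib, Finset.sum_add_distrib, ← Finset.mul_sum]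

lemma norm_Kc (α : ℝ) (z w : ℂ) :
    ‖Kc α z w‖ = Real.exp (-(α / 2) * Complex.normSq (z - w)) := by
  unfold Kc
  rw [Complex.norm_exp]
  congr 1
  have h1 : (-(α / 2 : ℂ)) = ((-(α / 2) : ℝ) : ℂ) := by push_cast; ring
  rw [h1, Complex.re_ofReal_mul]
  have h2 : ((((Complex.normSq z + Complex.normSq w : ℝ)) : ℂ)
      - 2 * (z * (starRingEnd ℂ) w)).re
      = Complex.normSq z + Complex.normSq w - 2 * (z * (starRingEnd ℂ) w).re := by
    simp
  rw [h2, Complex.normSq_sub]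

lemma continuous_Kc_pair {Z : Type*} [TopologicalSpace Z] (α : ℝ) {u v : Z → ℂ}
    (hu : Continuous u) (hv : Continuous v) :
    Continuous fun z : Z => Kc α (u z) (v z) := by
  unfold Kc
  refine Complex.continuous_exp.comp ?_
  refine continuous_const.mul (Continuous.sub ?_ ?_)
  · exact Complex.continuous_ofReal.comp
      ((Complex.continuous_normSq.comp hu).add (Complex.continuous_normSq.comp hv))
  · exact continuous_const.mul (hu.mul (Complex.continuous_conj.comp hv))

lemma sm_Kc (α : ℝ) : StronglyMeasurable (uncurry (Kc α)) :=
  (continuous_Kc_pair α continuous_fst continuous_snd).stronglyMeasurable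

lemma continuous_Kn_pair {Z : Type*} [TopologicalSpace Z] (n : ℕ) (α : ℝ)
    {u v : Z → Fin n → ℂ} (hu : Continuous u) (hv : Continuous v) :
    Continuous fun z : Z => Kn n α (u z) (v z) := by
  unfold Kn
  exact continuous_finset_prod _ fun i _ =>
    continuous_Kc_pair α ((continuous_apply i).comp hu) ((continuous_apply i).comp hv)

lemma sm_Kn (n : ℕ) (α : ℝ) : StronglyMeasurable (uncurry (Kn n α)) :=
  (continuous_Kn_pair n α continuous_fst continuous_snd).stronglyMeasurable

lemma memℒp_of_norm_rpow {Z : Type*} [MeasurableSpace Z] {μ : Measure Z} {f : Z → ℂ}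
    (hsm : AEStronglyMeasurable f μ) {t : ℝ} (ht : 0 < t)
    (hint : Integrable (fun z => ‖f z‖ ^ t) μ) : MemLp f (ENNReal.ofReal t) μ := by
  have h0 : ENNReal.ofReal t ≠ 0 := (ENNReal.ofReal_pos.mpr ht).ne'
  have hT : ENNReal.ofReal t ≠ ∞ := ENNReal.ofReal_ne_top
  refine (memLp_norm_rpow_iff hsm h0 hT).mp ?_
  rw [ENNReal.div_self h0 hT, ENNReal.toReal_ofReal ht.le]
  exact memLp_one_iff_integrable.mpr hint

lemma integrable_gaussC {c : ℝ} (hc : 0 < c) :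
    Integrable (fun z : ℂ => Real.exp (-c * Complex.normSq z)) volume := by
  have h1 : Integrable (fun p : ℝ × ℝ => Real.exp (-c * p.1 ^ 2) * Real.exp (-c * p.2 ^ 2))
      ((volume : Measure ℝ).prod volume) :=
    (integrable_exp_neg_mul_sq hc).mul_prod (integrable_exp_neg_mul_sq hc)
  have h3 := (Complex.volume_preserving_equiv_real_prod.integrable_comp_emb
    Complex.measurableEquivRealProd.measurableEmbedding
    (g := fun p : ℝ × ℝ => Real.exp (-c * p.1 ^ 2) * Real.exp (-c * p.2 ^ 2))).mpr h1
  refine h3.congr (Filter.Eventually.of_forall fun z => ?_)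
  show Real.exp (-c * z.re ^ 2) * Real.exp (-c * z.im ^ 2) = Real.exp (-c * Complex.normSq z)
  rw [← Real.exp_add, Complex.normSq_apply]
  ring_nf

lemma integrable_gauss_shift {c : ℝ} (hc : 0 < c) (ζ : ℂ) :
    Integrable (fun w : ℂ => Real.exp (-c * Complex.normSq (ζ - w))) volume := by
  have h1 : Integrable (fun w : ℂ => Real.exp (-c * Complex.normSq (w - ζ))) volume :=
    (integrable_gaussC hc).comp_sub_right ζ
  refine h1.congr (Filter.Eventually.of_forall fun w => ?_)
  simp only
  rw [show Complex.normSq (w - ζ) = Complex.normSq (ζ - w) from by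
    rw [← Complex.normSq_neg, neg_sub]]

lemma integrable_norm_Kc_rpow {α : ℝ} (hα : 0 < α) {t : ℝ} (ht : 0 < t) (z : ℂ) :
    Integrable (fun w : ℂ => ‖Kc α z w‖ ^ t) volume := by
  have heq : (fun w : ℂ => ‖Kc α z w‖ ^ t)
      = fun w : ℂ => Real.exp (-(α / 2 * t) * Complex.normSq (z - w)) := by
    funext w
    rw [norm_Kc, ← Real.exp_mul]
    ring_nf
  rw [heq]
  exact integrable_gauss_shift (by positivity) z

lemma memℒp_Kc {α : ℝ} (hα : 0 < α) {t : ℝ} (ht : 0 < t) (z : ℂ) :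
    MemLp (Kc α z) (ENNReal.ofReal t) volume := by
  refine memℒp_of_norm_rpow ?_ ht (integrable_norm_Kc_rpow hα ht z)
  exact (continuous_Kc_pair α continuous_const continuous_id).aestronglyMeasurable

lemma memℒp_Kn {n : ℕ} {α : ℝ} (hα : 0 < α) {t : ℝ} (ht : 0 < t) (z : Fin n → ℂ) :
    MemLp (Kn n α z) (ENNReal.ofReal t) volume := by
  refine memℒp_of_norm_rpow ?_ ht ?_
  · exact (continuous_Kn_pair n α continuous_const continuous_id).aestronglyMeasurable
  · have heq : (fun w : Fin n → ℂ => ‖Kn n α z w‖ ^ t)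
        = fun w : Fin n → ℂ => ∏ i, (fun b : ℂ => ‖Kc α (z i) b‖ ^ t) (w i) := by
      funext w
      unfold Kn
      rw [norm_prod, ← Real.finset_prod_rpow _ _ (fun i _ => norm_nonneg _) t]
    rw [heq]
    exact Integrable.fin_nat_prod fun i => integrable_norm_Kc_rpow hα ht (z i)

end QAux
namespace QAux
open Function Real

/-- the Gaussian fixed point -/
def f₀ (α : ℝ) : ℂ → ℂ := fun w => Complex.exp (-(α / 2 : ℂ) * ((Complex.normSq w : ℝ) : ℂ))

lemma norm_f₀ (α : ℝ) (w : ℂ) : ‖f₀ α w‖ = Real.exp (-(α / 2) * Complex.normSq w) := by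
  unfold f₀
  rw [Complex.norm_exp]
  congr 1
  have h1 : (-(α / 2 : ℂ)) = ((-(α / 2) : ℝ) : ℂ) := by push_cast; ring
  rw [h1, Complex.re_ofReal_mul, Complex.ofReal_re]

lemma continuous_f₀ (α : ℝ) : Continuous (f₀ α) := by
  unfold f₀
  exact Complex.continuous_exp.comp (continuous_const.mul
    (Complex.continuous_ofReal.comp Complex.continuous_normSq))

lemma memℒp_f₀ {α : ℝ} (hα : 0 < α) {t : ℝ} (ht : 0 < t) :
    MemLp (f₀ α) (ENNReal.ofReal t) volume := by
  refine memℒp_of_norm_rpow (continuous_f₀ α).aestronglyMeasurable ht ?_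
  have heq : (fun w : ℂ => ‖f₀ α w‖ ^ t)
      = fun w : ℂ => Real.exp (-(α / 2 * t) * Complex.normSq w) := by
    funext w
    rw [norm_f₀, ← Real.exp_mul]
    ring_nf
  rw [heq]
  exact integrable_gaussC (by positivity)

lemma gauss_integral_z {α : ℝ} (hα : 0 < α) (z : ℂ) :
    (∫ w : ℂ, Complex.exp ((α : ℂ) * (z * (starRingEnd ℂ) w)
        - (α : ℂ) * ((Complex.normSq w : ℝ) : ℂ)) ∂volume)
      = ((Real.pi : ℂ) / (α : ℂ)) := by
  have hb : (-(α : ℂ)).re < 0 := by simpa using hα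
  have hg1 := integral_cexp_quadratic hb ((α : ℂ) * z) 0
  have hg2 := integral_cexp_quadratic hb (-((α : ℂ) * z * Complex.I)) 0
  set g₁ : ℝ → ℂ := fun x => Complex.exp (-(α:ℂ) * (x:ℂ) ^ 2 + ((α : ℂ) * z) * (x:ℂ) + 0) with hg₁def
  set g₂ : ℝ → ℂ := fun y => Complex.exp (-(α:ℂ) * (y:ℂ) ^ 2
    + (-((α : ℂ) * z * Complex.I)) * (y:ℂ) + 0) with hg₂def
  have hsplit : ∀ w : ℂ, Complex.exp ((α : ℂ) * (z * (starRingEnd ℂ) w)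
      - (α : ℂ) * ((Complex.normSq w : ℝ) : ℂ)) = g₁ w.re * g₂ w.im := fun w => by
    rw [hg₁def, hg₂def]
    simp only
    rw [← Complex.exp_add]
    congr 1
    rw [show (starRingEnd ℂ) w = ((w.re : ℝ) : ℂ) - ((w.im : ℝ) : ℂ) * Complex.I from by
      simp [Complex.ext_iff]]
    rw [Complex.normSq_apply]
    push_cast
    ring
  have hstep1 : (∫ w : ℂ, Complex.exp ((α : ℂ) * (z * (starRingEnd ℂ) w)
      - (α : ℂ) * ((Complex.normSq w : ℝ) : ℂ)) ∂volume)
      = ∫ w : ℂ, g₁ w.re * g₂ w.im ∂volume := by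
    simp_rw [hsplit]
  have hstep2 : (∫ w : ℂ, g₁ w.re * g₂ w.im ∂volume)
      = ∫ p : ℝ × ℝ, g₁ p.1 * g₂ p.2 ∂(volume : Measure (ℝ × ℝ)) := by
    rw [← Complex.volume_preserving_equiv_real_prod.integral_comp
      Complex.measurableEquivRealProd.measurableEmbedding
      (fun p : ℝ × ℝ => g₁ p.1 * g₂ p.2)]
    rfl
  have hstep3 : (∫ p : ℝ × ℝ, g₁ p.1 * g₂ p.2 ∂(volume : Measure (ℝ × ℝ)))
      = (∫ x : ℝ, g₁ x) * ∫ y : ℝ, g₂ y := integral_prod_mul g₁ g₂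
  have hα0 : (α : ℂ) ≠ 0 := Complex.ofReal_ne_zero.mpr hα.ne'
  have hne : ((Real.pi : ℝ) : ℂ) / (α : ℂ) ≠ 0 :=
    div_ne_zero (Complex.ofReal_ne_zero.mpr Real.pi_ne_zero) hα0
  rw [hstep1, hstep2, hstep3, hg₁def, hg₂def, hg1, hg2, neg_neg]
  have h4 : (-((α : ℂ) * z * Complex.I)) ^ 2 = -(((α : ℂ) * z) ^ 2) := by
    calc (-((α : ℂ) * z * Complex.I)) ^ 2 = ((α : ℂ) * z) ^ 2 * Complex.I ^ 2 := by ring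
      _ = -(((α : ℂ) * z) ^ 2) := by rw [Complex.I_sq]; ring
  rw [h4, mul_mul_mul_comm]
  have hexp : Complex.exp (0 - ((α : ℂ) * z) ^ 2 / (4 * -(α : ℂ)))
      * Complex.exp (0 - -(((α : ℂ) * z) ^ 2) / (4 * -(α : ℂ))) = 1 := by
    rw [← Complex.exp_add, show (0 - ((α : ℂ) * z) ^ 2 / (4 * -(α : ℂ)))
      + (0 - -(((α : ℂ) * z) ^ 2) / (4 * -(α : ℂ))) = 0 from by ring, Complex.exp_zero]
  rw [hexp, mul_one, ← Complex.cpow_add _ _ hne]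
  norm_num

lemma kop_f₀ {α : ℝ} (hα : 0 < α) :
    kop volume (α / Real.pi) (Kc α) (f₀ α) = f₀ α := by
  funext z
  unfold kop
  have h1 : ∀ w : ℂ, Kc α z w * f₀ α w
      = Complex.exp (-(α/2 : ℂ) * ((Complex.normSq z : ℝ) : ℂ))
        * Complex.exp ((α : ℂ) * (z * (starRingEnd ℂ) w)
          - (α : ℂ) * ((Complex.normSq w : ℝ) : ℂ)) := fun w => by
    unfold Kc f₀
    rw [← Complex.exp_add, ← Complex.exp_add]
    congr 1
    push_cast
    ring
  simp_rw [h1, integral_const_mul, gauss_integral_z hα z]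
  unfold f₀
  have hα0 : (α : ℂ) ≠ 0 := Complex.ofReal_ne_zero.mpr hα.ne'
  have hπ0 : ((Real.pi : ℝ) : ℂ) ≠ 0 := Complex.ofReal_ne_zero.mpr Real.pi_ne_zero
  push_cast
  field_simp

lemma one_le_Nc {α : ℝ} (hα : 0 < α) {p : ℝ} (hp : 1 < p) :
    1 ≤ opNormLp (volume : Measure ℂ) (ENNReal.ofReal p)
      (kop volume (α / Real.pi) (Kc α)) := by
  have hp0 : (0 : ℝ) < p := by linarith
  have hmem : MemLp (f₀ α) (ENNReal.ofReal p) volume := memℒp_f₀ hα hp0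
  have h0 : eLpNorm (f₀ α) (ENNReal.ofReal p) volume ≠ 0 := by
    rw [Ne, eLpNorm_eq_zero_iff hmem.1 (ENNReal.ofReal_pos.mpr hp0).ne']
    intro h
    obtain ⟨w, hw⟩ := h.exists
    have hw' : f₀ α w = 0 := by simpa using hw
    exact Complex.exp_ne_zero _ hw'
  apply le_sSup
  refine ⟨f₀ α, hmem, h0, ?_⟩
  rw [kop_f₀ hα, ENNReal.div_self h0 hmem.eLpNorm_ne_top]

end QAux
namespace QAux
open Function Real

lemma Qop_aesm {n : ℕ} (α : ℝ) {r : ℝ≥0∞} {f : (Fin n → ℂ) → ℂ}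
    (hf : MemLp f r (volume : Measure (Fin n → ℂ))) :
    AEStronglyMeasurable (Qop n α f) (volume : Measure (Fin n → ℂ)) := by
  rw [Qop_eq_kop]
  exact kop_aesm (sm_Kn n α) hf.1

lemma opNorm_funUnique {α : ℝ} (r : ℝ≥0∞) :
    opNormLp (volume : Measure (Fin 1 → ℂ)) r (Qop 1 α)
      = opNormLp (volume : Measure ℂ) r (kop volume (α / Real.pi) (Kc α)) := by
  set e := MeasurableEquiv.funUnique (Fin 1) ℂ with hedef
  have hpres : MeasurePreserving (⇑e) (volume : Measure (Fin 1 → ℂ)) (volume : Measure ℂ) := by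
    have h := measurePreserving_funUnique (volume : Measure ℂ) (Fin 1)
    rwa [← volume_pi] at h
  refine (opNormLp_conj e hpres ?_ ?_).symm
  · intro g
    funext ζ
    rw [Qop_eq_kop]
    show (((α / Real.pi) : ℝ) : ℂ) * (∫ w : ℂ, Kc α ζ w * g w ∂volume)
      = ((((α / Real.pi) ^ 1 : ℝ)) : ℂ)
        * ∫ w : Fin 1 → ℂ, Kn 1 α (e.symm ζ) w * (g ∘ ⇑e) w ∂volume
    have hint : ∀ w : Fin 1 → ℂ, Kn 1 α (e.symm ζ) w * (g ∘ ⇑e) w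
        = (fun b : ℂ => Kc α ζ b * g b) (e w) := fun w => by
      show Kn 1 α (e.symm ζ) w * g (e w) = Kc α ζ (e w) * g (e w)
      congr 1
      unfold Kn
      rw [Fin.prod_univ_one]
      rfl
    simp_rw [hint]
    rw [hpres.integral_comp e.measurableEmbedding (fun b : ℂ => Kc α ζ b * g b), pow_one]
  · intro f hf
    exact Qop_aesm α hf

lemma opNorm_succ {α : ℝ} (r : ℝ≥0∞) (m : ℕ) :
    opNormLp (volume : Measure (Fin (m + 1) → ℂ)) r (Qop (m + 1) α)
      = opNormLp ((volume : Measure ℂ).prod (volume : Measure (Fin m → ℂ))) r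
          (kop ((volume : Measure ℂ).prod (volume : Measure (Fin m → ℂ)))
            ((α / Real.pi) * (α / Real.pi) ^ m) (pk (Kc α) (Kn m α))) := by
  set e := MeasurableEquiv.piFinSuccAbove (fun _ : Fin (m + 1) => ℂ) 0 with hedef
  have hpres : MeasurePreserving (⇑e) (volume : Measure (Fin (m + 1) → ℂ))
      ((volume : Measure ℂ).prod (volume : Measure (Fin m → ℂ))) := by
    have h := measurePreserving_piFinSuccAbove (fun _ : Fin (m + 1) => (volume : Measure ℂ)) 0
    rwa [← volume_pi, ← volume_pi] at h
  symm
  refine opNormLp_conj e hpres ?_ ?_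
  · intro g
    funext ζ
    rw [Qop_eq_kop]
    show ((((α / Real.pi) * (α / Real.pi) ^ m : ℝ)) : ℂ)
        * (∫ w : ℂ × (Fin m → ℂ), pk (Kc α) (Kn m α) ζ w * g w
            ∂((volume : Measure ℂ).prod (volume : Measure (Fin m → ℂ))))
      = ((((α / Real.pi) ^ (m + 1) : ℝ)) : ℂ)
        * ∫ w : Fin (m + 1) → ℂ, Kn (m + 1) α (e.symm ζ) w * (g ∘ ⇑e) w ∂volume
    have hint : ∀ w : Fin (m + 1) → ℂ, Kn (m + 1) α (e.symm ζ) w * (g ∘ ⇑e) w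
        = (fun b : ℂ × (Fin m → ℂ) => pk (Kc α) (Kn m α) ζ b * g b) (e w) := fun w => by
      show Kn (m + 1) α (e.symm ζ) w * g (e w) = pk (Kc α) (Kn m α) ζ (e w) * g (e w)
      congr 1
      unfold Kn pk
      rw [Fin.prod_univ_succAbove (fun i => Kc α ((e.symm ζ) i) (w i)) 0]
      have he1 : (e.symm ζ) 0 = ζ.1 := by
        simp [hedef, MeasurableEquiv.piFinSuccAbove_symm_apply]
      have he2 : ∀ j : Fin m, (e.symm ζ) ((0 : Fin (m + 1)).succAbove j) = ζ.2 j := fun j => by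
        simp [hedef, MeasurableEquiv.piFinSuccAbove_symm_apply]
      have he3 : (e w).1 = w 0 := rfl
      have he4 : ∀ j : Fin m, (e w).2 j = w ((0 : Fin (m + 1)).succAbove j) := fun j => rfl
      rw [he1, he3]
      show _ * (∏ j, Kc α ((e.symm ζ) ((0 : Fin (m+1)).succAbove j)) (w ((0 : Fin (m+1)).succAbove j))) = _
      rw [show (∏ j, Kc α ((e.symm ζ) ((0 : Fin (m+1)).succAbove j)) (w ((0 : Fin (m+1)).succAbove j)))
          = ∏ j, Kc α (ζ.2 j) ((e w).2 j) from Finset.prod_congr rfl fun j _ => by rw [he2 j, he4 j]]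
    simp_rw [hint]
    rw [hpres.integral_comp e.measurableEmbedding
      (fun b : ℂ × (Fin m → ℂ) => pk (Kc α) (Kn m α) ζ b * g b)]
    push_cast [pow_succ]
    ring
  · intro f hf
    exact Qop_aesm α hf

theorem opNorm_pow {α : ℝ} (hα : 0 < α) {p : ℝ} (hp : 1 < p) :
    ∀ m : ℕ, 1 ≤ m →
      opNormLp (volume : Measure (Fin m → ℂ)) (ENNReal.ofReal p) (Qop m α)
        = opNormLp (volume : Measure ℂ) (ENNReal.ofReal p)
            (kop volume (α / Real.pi) (Kc α)) ^ m := by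
  have hpq : p.HolderConjugate p.conjExponent := Real.HolderConjugate.conjExponent hp
  set q := p.conjExponent with hqdef
  have hq0 : 0 < q := hpq.symm.pos
  set Nc := opNormLp (volume : Measure ℂ) (ENNReal.ofReal p)
    (kop volume (α / Real.pi) (Kc α)) with hNcdef
  have hNc1 : 1 ≤ Nc := one_le_Nc hα hp
  intro m
  induction m with
  | zero => omega
  | succ m ih =>
    intro _
    by_cases hm : 1 ≤ m
    · have IH := ih hm
      -- rewrite Qop m α as kernel operator
      have IH' : opNormLp (volume : Measure (Fin m → ℂ)) (ENNReal.ofReal p)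
          (kop (volume : Measure (Fin m → ℂ)) ((α / Real.pi) ^ m) (Kn m α)) = Nc ^ m := by
        rw [← Qop_eq_kop]; exact IH
      have hN₂0 : opNormLp (volume : Measure (Fin m → ℂ)) (ENNReal.ofReal p)
          (kop (volume : Measure (Fin m → ℂ)) ((α / Real.pi) ^ m) (Kn m α)) ≠ 0 := by
        rw [IH']
        exact (lt_of_lt_of_le one_pos (one_le_pow_of_one_le' hNc1 m)).ne'
      rw [opNorm_succ (ENNReal.ofReal p) m]
      apply le_antisymm
      · refine le_trans (opNorm_prod_le hpq (sm_Kc α) (sm_Kn m α)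
          (fun x => memℒp_Kc hα hq0 x) (fun y => memℒp_Kn hα hq0 y) hN₂0) ?_
        rw [IH', pow_succ']
      · refine le_trans ?_ (le_opNorm_prod (ENNReal.ofReal_pos.mpr (by linarith : (0:ℝ) < p)).ne'
          (sm_Kc α) (sm_Kn m α))
        rw [IH', pow_succ']
    · -- m = 0, so m + 1 = 1
      have hm0 : m = 0 := by omega
      subst hm0
      rw [pow_one, opNorm_funUnique]

end QAux
end QAux


/-- **Corollary (reduction to one dimension)**: for `1 < p < ∞` and `α > 0`, the
operator norm of `Q_α` on `L^p(ℂⁿ, λ)` is the `n`-th power of the operator norm of the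
one-dimensional operator `Q_α¹` on `L^p(ℂ, λ)`. -/
theorem Qop_opNorm_pow (n : ℕ) (hn : 1 ≤ n) (p : ℝ) (hp : 1 < p) (α : ℝ)
    (hα : 0 < α) :
    opNormLp (volume : Measure (Fin n → ℂ)) (ENNReal.ofReal p) (Qop n α) =
      opNormLp (volume : Measure (Fin 1 → ℂ)) (ENNReal.ofReal p) (Qop 1 α) ^ n := by
  rw [QAux.opNorm_funUnique (ENNReal.ofReal p), QAux.opNorm_pow hα hp n hn]
end

section
/- Let 1 < p < ∞, A ∈ 𝒜², and U ∈ SO(2) (a real orthogonal 2×2 matrix with determinant 1). Then Uᵀ·A·U ∈ 𝒜² and h_p(A) = h_p(Uᵀ·A·U). -/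
open MeasureTheory Complex ENNReal Matrix

/-- The matrix `J = [[0,−1],[1,0]]`. -/
def J2 : Matrix (Fin 2) (Fin 2) ℝ := !![0, -1; 1, 0]

/-- `Ω(M) = Jᵀ Re(M) J − Re(M) − Im(M) J − Jᵀ Im(M)` for a complex `2 × 2` matrix. -/
def Omega2 (M : Matrix (Fin 2) (Fin 2) ℂ) : Matrix (Fin 2) (Fin 2) ℝ :=
  J2ᵀ * M.map Complex.re * J2 - M.map Complex.re -
    M.map Complex.im * J2 - J2ᵀ * M.map Complex.im

/-- The function `h_p(A) = det Re(A) / ( |det(A+I)|^p det(I + Ω((I+A)⁻¹)) )`. -/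
noncomputable def hFun (p : ℝ) (A : Matrix (Fin 2) (Fin 2) ℂ) : ℝ :=
  (A.map Complex.re).det /
    (‖(A + 1).det‖ ^ p *
      ((1 : Matrix (Fin 2) (Fin 2) ℝ) + Omega2 ((1 + A)⁻¹)).det)

/-- Coordinates `(a,d,b,e,g,f)` on the 6-real-dimensional space of complex symmetric
`2 × 2` matrices: `toMat v = [[a+ie, b+if],[b+if, d+ig]]`. -/
def toMat (v : Fin 6 → ℝ) : Matrix (Fin 2) (Fin 2) ℂ :=
  !![⟨v 0, v 3⟩, ⟨v 2, v 5⟩; ⟨v 2, v 5⟩, ⟨v 1, v 4⟩]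


section aux

lemma mapOfReal_mul (W U : Matrix (Fin 2) (Fin 2) ℝ) :
    W.map Complex.ofReal * U.map Complex.ofReal = (W * U).map Complex.ofReal := by
  ext i j
  push_cast [Matrix.mul_apply, Matrix.map_apply]
  ring

lemma map_re_mul_left (U : Matrix (Fin 2) (Fin 2) ℝ) (M : Matrix (Fin 2) (Fin 2) ℂ) :
    ((U.map Complex.ofReal) * M).map Complex.re = U * M.map Complex.re := by
  ext i j
  simp [Matrix.mul_apply, Matrix.map_apply, Complex.re_sum, Complex.re_ofReal_mul]

lemma map_re_mul_right (U : Matrix (Fin 2) (Fin 2) ℝ) (M : Matrix (Fin 2) (Fin 2) ℂ) :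
    (M * (U.map Complex.ofReal)).map Complex.re = M.map Complex.re * U := by
  ext i j
  simp [Matrix.mul_apply, Matrix.map_apply, Complex.re_sum, mul_comm, Complex.re_ofReal_mul]

lemma map_im_mul_left (U : Matrix (Fin 2) (Fin 2) ℝ) (M : Matrix (Fin 2) (Fin 2) ℂ) :
    ((U.map Complex.ofReal) * M).map Complex.im = U * M.map Complex.im := by
  ext i j
  simp [Matrix.mul_apply, Matrix.map_apply, Complex.im_sum, Complex.im_ofReal_mul]

lemma map_im_mul_right (U : Matrix (Fin 2) (Fin 2) ℝ) (M : Matrix (Fin 2) (Fin 2) ℂ) :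
    (M * (U.map Complex.ofReal)).map Complex.im = M.map Complex.im * U := by
  ext i j
  simp [Matrix.mul_apply, Matrix.map_apply, Complex.im_sum, mul_comm, Complex.im_ofReal_mul]

lemma SO2_comm_J2 (U : Matrix (Fin 2) (Fin 2) ℝ) (hU : Uᵀ * U = 1) (hdet : U.det = 1) :
    U * J2 = J2 * U := by
  have e1 := congrFun (congrFun hU 0) 0
  have e2 := congrFun (congrFun hU 0) 1
  have e3 := congrFun (congrFun hU 1) 1
  simp [Matrix.mul_apply, Fin.sum_univ_two, Matrix.one_apply] at e1 e2 e3
  rw [Matrix.det_fin_two] at hdet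
  have hd : U 1 1 = U 0 0 := by
    linear_combination (U 0 0) * hdet + (U 1 0) * e2 - (U 1 1) * e1
  have hb : U 0 1 = -(U 1 0) := by
    linear_combination (U 0 0) * e2 - (U 1 0) * hdet - (U 0 1) * e1
  ext i j
  fin_cases i <;> fin_cases j <;>
    simp [J2, Matrix.mul_apply, Fin.sum_univ_two, hd, hb]

end aux

/-- **Lemma (rotation invariance of `h_p`)**: for `1 < p < ∞`, `A ∈ 𝒜²` (complex
symmetric with positive definite real part), and `U ∈ SO(2)`, the matrix `Uᵀ A U`
again lies in `𝒜²` and `h_p(A) = h_p(Uᵀ A U)`. -/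
theorem hFun_SO2_invariant (p : ℝ) (hp : 1 < p) (A : Matrix (Fin 2) (Fin 2) ℂ)
    (hsymm : A.IsSymm) (hpos : (A.map Complex.re).PosDef)
    (U : Matrix (Fin 2) (Fin 2) ℝ) (hU : Uᵀ * U = 1) (hdet : U.det = 1) :
    ((U.map Complex.ofReal)ᵀ * A * U.map Complex.ofReal).IsSymm ∧
    ((((U.map Complex.ofReal)ᵀ * A * U.map Complex.ofReal).map Complex.re).PosDef) ∧
    hFun p A = hFun p ((U.map Complex.ofReal)ᵀ * A * U.map Complex.ofReal) := by
  set V := U.map Complex.ofReal with hVdef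
  have hVt : Vᵀ = Uᵀ.map Complex.ofReal := (Matrix.transpose_map).symm
  have hV1 : Vᵀ * V = 1 := by
    rw [hVt, mapOfReal_mul, hU]
    ext i j
    simp [Matrix.map_apply, Matrix.one_apply]
    split <;> simp
  have hV1' : V * Vᵀ = 1 := mul_eq_one_comm.mp hV1
  have hVinv : V⁻¹ = Vᵀ := Matrix.inv_eq_left_inv hV1
  have hVtinv : (Vᵀ)⁻¹ = V := Matrix.inv_eq_left_inv hV1'
  have hUt1 : U * Uᵀ = 1 := mul_eq_one_comm.mp hU
  -- congruence of re/im parts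
  have hre : ∀ M : Matrix (Fin 2) (Fin 2) ℂ,
      (Vᵀ * M * V).map Complex.re = Uᵀ * M.map Complex.re * U := by
    intro M
    rw [Matrix.mul_assoc, hVt, map_re_mul_left, map_re_mul_right, Matrix.mul_assoc]
  have him : ∀ M : Matrix (Fin 2) (Fin 2) ℂ,
      (Vᵀ * M * V).map Complex.im = Uᵀ * M.map Complex.im * U := by
    intro M
    rw [Matrix.mul_assoc, hVt, map_im_mul_left, map_im_mul_right, Matrix.mul_assoc]
  -- commutation with J2
  have hUJ : U * J2 = J2 * U := SO2_comm_J2 U hU hdet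
  have hUJt : J2ᵀ * Uᵀ = Uᵀ * J2ᵀ := by
    have := congrArg Matrix.transpose hUJ
    simpa [Matrix.transpose_mul] using this
  -- Omega conjugation
  have hOmega : ∀ M : Matrix (Fin 2) (Fin 2) ℂ,
      Omega2 (Vᵀ * M * V) = Uᵀ * Omega2 M * U := by
    intro M
    unfold Omega2
    rw [hre, him]
    set R := M.map Complex.re
    set S := M.map Complex.im
    have t1 : J2ᵀ * (Uᵀ * R * U) * J2 = Uᵀ * (J2ᵀ * R * J2) * U := by
      calc J2ᵀ * (Uᵀ * R * U) * J2 = J2ᵀ * Uᵀ * R * (U * J2) := by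
            simp only [Matrix.mul_assoc]
        _ = Uᵀ * J2ᵀ * R * (J2 * U) := by rw [hUJt, hUJ]
        _ = Uᵀ * (J2ᵀ * R * J2) * U := by simp only [Matrix.mul_assoc]
    have t2 : Uᵀ * S * U * J2 = Uᵀ * (S * J2) * U := by
      calc Uᵀ * S * U * J2 = Uᵀ * S * (U * J2) := by simp only [Matrix.mul_assoc]
        _ = Uᵀ * S * (J2 * U) := by rw [hUJ]
        _ = Uᵀ * (S * J2) * U := by simp only [Matrix.mul_assoc]
    have t3 : J2ᵀ * (Uᵀ * S * U) = Uᵀ * (J2ᵀ * S) * U := by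
      calc J2ᵀ * (Uᵀ * S * U) = J2ᵀ * Uᵀ * S * U := by simp only [Matrix.mul_assoc]
        _ = Uᵀ * J2ᵀ * S * U := by rw [hUJt]
        _ = Uᵀ * (J2ᵀ * S) * U := by simp only [Matrix.mul_assoc]
    rw [t1, t2, t3]
    simp only [Matrix.sub_mul, Matrix.mul_sub]
  -- determinant conjugation
  have hdetconj : ∀ X : Matrix (Fin 2) (Fin 2) ℝ, (Uᵀ * X * U).det = X.det := by
    intro X
    rw [Matrix.det_mul, Matrix.det_mul, Matrix.det_transpose, hdet]
    ring
  have hVdet : V.det = 1 := by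
    have h := congrArg (Complex.ofReal) hdet
    rw [Matrix.det_fin_two] at h
    push_cast at h
    rw [hVdef, Matrix.det_fin_two]
    simp only [Matrix.map_apply]
    linear_combination h
  -- (1 + VᵀAV) = Vᵀ(1+A)V
  have hone : (1 : Matrix (Fin 2) (Fin 2) ℂ) + Vᵀ * A * V = Vᵀ * (1 + A) * V := by
    rw [Matrix.mul_add, Matrix.add_mul, Matrix.mul_one, hV1]
  have hinv : (1 + Vᵀ * A * V)⁻¹ = Vᵀ * (1 + A)⁻¹ * V := by
    rw [hone, Matrix.mul_inv_rev, Matrix.mul_inv_rev, hVinv, hVtinv, Matrix.mul_assoc]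
  refine ⟨?_, ?_, ?_⟩
  · -- symmetry
    unfold Matrix.IsSymm
    rw [Matrix.transpose_mul, Matrix.transpose_mul, Matrix.transpose_transpose, hsymm.eq,
      Matrix.mul_assoc]
  · -- positive definiteness
    rw [hre A]
    rw [Matrix.posDef_iff_dotProduct_mulVec]
    constructor
    · have h1 := hpos.1
      unfold Matrix.IsHermitian at h1 ⊢
      rw [Matrix.conjTranspose_mul, Matrix.conjTranspose_mul]
      simp only [Matrix.conjTranspose_eq_transpose_of_trivial, Matrix.transpose_transpose]
      rw [show (A.map Complex.re)ᵀ = A.map Complex.re from by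
        simpa [Matrix.conjTranspose_eq_transpose_of_trivial] using h1, Matrix.mul_assoc]
    · intro x hx
      have hUx : U *ᵥ x ≠ 0 := by
        intro h
        apply hx
        have : Uᵀ *ᵥ (U *ᵥ x) = x := by rw [Matrix.mulVec_mulVec, hU, Matrix.one_mulVec]
        rw [h, Matrix.mulVec_zero] at this
        exact this.symm
      have := hpos.dotProduct_mulVec_pos hUx
      simp only [star_trivial] at this ⊢
      calc (0:ℝ) < (U *ᵥ x) ⬝ᵥ (A.map Complex.re *ᵥ (U *ᵥ x)) := this
        _ = x ⬝ᵥ ((Uᵀ * A.map Complex.re * U) *ᵥ x) := by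
            rw [Matrix.mul_assoc, ← Matrix.mulVec_mulVec, ← Matrix.mulVec_mulVec,
              dotProduct_mulVec x, Matrix.vecMul_transpose]
  · -- hFun equality
    unfold hFun
    rw [hre A, hdetconj]
    have hd1 : (Vᵀ * A * V + 1).det = (A + 1).det := by
      have : Vᵀ * A * V + 1 = Vᵀ * (A + 1) * V := by
        rw [add_comm, add_comm A 1, hone]
      rw [this, Matrix.det_mul, Matrix.det_mul, Matrix.det_transpose, hVdet]
      ring
    rw [hd1, hinv, hOmega]
    have : (1 : Matrix (Fin 2) (Fin 2) ℝ) + Uᵀ * Omega2 ((1+A)⁻¹) * U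
        = Uᵀ * (1 + Omega2 ((1+A)⁻¹)) * U := by
      rw [Matrix.mul_add, Matrix.add_mul, Matrix.mul_one, hU]
    rw [this, hdetconj]
end
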